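/- arXiv:2109.09581 — 5 statements merged into one kernel-verified Lean document; each statement's English description precedes it below -/
import Mathlib

section
/- Let C be a finite index set, α > 0 a real number, (λ_j)_{j∈C} complex numbers, (μ_j)_{j∈C} pairwise distinct complex numbers, and d ≥ 1 an integer. Assume that for all M > 0 the denominators Mα + μ_j + conj(μ_{j'}) are nonzero and Σ_{j,j'∈C} λ_j · conj(λ_{j'}) / (Mα + μ_j + conj(μ_{j'}))^d = 0. Then λ_j = 0 for all j ∈ C. -/
open Polynomial Finset Filter Topology


/-- If for all `M > 0` the double sum
`Σ_{j,j'} λ_j conj(λ_{j'}) / (Mα + μ_j + conj(μ_{j'}))^d` vanishes (the denominators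
being nonzero), with the `μ_j` pairwise distinct, then all `λ_j` vanish. -/
theorem vanishing_quadratic_sum
    (ι : Type*) [Fintype ι] (α : ℝ) (hα : 0 < α) (d : ℕ) (hd : 1 ≤ d)
    (lam μ : ι → ℂ) (hμ : Function.Injective μ)
    (h : ∀ M : ℝ, 0 < M →
      (∀ j j' : ι, ((M * α : ℝ) : ℂ) + μ j + (starRingEnd ℂ) (μ j') ≠ 0) ∧
      ∑ j : ι, ∑ j' : ι,
        lam j * (starRingEnd ℂ) (lam j')
          / (((M * α : ℝ) : ℂ) + μ j + (starRingEnd ℂ) (μ j')) ^ d = 0) :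
    ∀ j : ι, lam j = 0 := by
  classical
  set a : ι × ι → ℂ := fun p => μ p.1 + (starRingEnd ℂ) (μ p.2) with ha
  set c : ι × ι → ℂ := fun p => lam p.1 * (starRingEnd ℂ) (lam p.2) with hc
  -- Step 1: the rational function vanishes wherever its denominators are nonzero
  have step1 : ∀ z : ℂ, (∀ p : ι × ι, z + a p ≠ 0) →
      ∑ p : ι × ι, c p / (z + a p) ^ d = 0 := by
    set P : ℂ[X] := ∑ p : ι × ι, Polynomial.C (c p) *
      ∏ q ∈ Finset.univ.erase p, (X + Polynomial.C (a q)) ^ d with hP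
    have key : ∀ z : ℂ, (∀ p : ι × ι, z + a p ≠ 0) →
        P.eval z = (∑ p : ι × ι, c p / (z + a p) ^ d) * ∏ q : ι × ι, (z + a q) ^ d := by
      intro z hz
      rw [Finset.sum_mul]
      simp only [hP, Polynomial.eval_finset_sum, eval_mul, eval_C, eval_prod, eval_pow,
        eval_add, eval_X]
      refine Finset.sum_congr rfl fun p _ => ?_
      have hD : (z + a p) ^ d ≠ 0 := pow_ne_zero _ (hz p)
      rw [← Finset.mul_prod_erase Finset.univ (fun q => (z + a q) ^ d) (Finset.mem_univ p)]
      simp only [hc]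
      field_simp
    have hPz : ∀ M : ℝ, 0 < M → P.eval ((M * α : ℝ) : ℂ) = 0 := by
      intro M hM
      obtain ⟨hne, hsum⟩ := h M hM
      have hz : ∀ p : ι × ι, ((M * α : ℝ) : ℂ) + a p ≠ 0 := by
        intro p
        have := hne p.1 p.2
        rwa [add_assoc] at this
      rw [key _ hz]
      have : ∑ p : ι × ι, c p / (((M * α : ℝ) : ℂ) + a p) ^ d = 0 := by
        rw [← hsum, Fintype.sum_prod_type]
        exact Finset.sum_congr rfl fun j _ => Finset.sum_congr rfl fun j' _ => by
          rw [add_assoc]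
      rw [this, zero_mul]
    have hP0 : P = 0 := by
      apply Polynomial.eq_zero_of_infinite_isRoot
      have hinj : Set.InjOn (fun M : ℝ => ((M * α : ℝ) : ℂ)) (Set.Ioi 0) := by
        intro x _ y _ hxy
        simp only [Complex.ofReal_inj] at hxy
        exact mul_right_cancel₀ (ne_of_gt hα) hxy
      have himg : ((fun M : ℝ => ((M * α : ℝ) : ℂ)) '' Set.Ioi 0).Infinite :=
        (Set.Ioi_infinite 0).image hinj
      refine himg.mono ?_
      rintro z ⟨M, hM, rfl⟩
      exact hPz M hM
    intro z hz
    have := key z hz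
    rw [hP0, Polynomial.eval_zero] at this
    have hprod : (∏ q : ι × ι, (z + a q) ^ d) ≠ 0 :=
      Finset.prod_ne_zero_iff.2 fun q _ => pow_ne_zero _ (hz q)
    exact (mul_eq_zero.1 this.symm).resolve_right hprod
  -- Step 2: the coefficient group sums vanish
  have step2 : ∀ t : ℂ, ∑ p ∈ Finset.univ.filter (fun p => a p = t), c p = 0 := by
    intro t
    set s : Set ℂ := {z | ∀ p : ι × ι, z + a p ≠ 0} with hs
    have hscompl : s = (Set.range (fun p : ι × ι => -(a p)))ᶜ := by
      ext z
      simp only [hs, Set.mem_setOf_eq, Set.mem_compl_iff, Set.mem_range, not_exists]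
      constructor
      · intro hz p hp
        exact hz p (by rw [← hp]; ring)
      · intro hz p hp
        exact hz p (by linear_combination -hp)
    have hdense : Dense s := by
      rw [hscompl]
      exact ((Set.finite_range _).countable).dense_compl ℂ
    have hnb : Filter.NeBot (𝓝[s] (-t)) :=
      mem_closure_iff_nhdsWithin_neBot.1 (hdense (-t))
    set G : ℂ → ℂ := fun z => ∑ p : ι × ι, c p * ((z + t) / (z + a p)) ^ d with hG
    have hG0 : ∀ z ∈ s, G z = 0 := by
      intro z hz
      have := step1 z hz
      calc G z = (z + t) ^ d * ∑ p : ι × ι, c p / (z + a p) ^ d := by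
            rw [Finset.mul_sum]
            exact Finset.sum_congr rfl fun p _ => by rw [div_pow]; ring
        _ = 0 := by rw [this, mul_zero]
    have hlim : Filter.Tendsto G (𝓝[s] (-t))
        (𝓝 (∑ p ∈ Finset.univ.filter (fun p => a p = t), c p)) := by
      rw [Finset.sum_filter]
      apply tendsto_finset_sum
      intro p _
      by_cases hp : a p = t
      · simp only [hp, if_true]
        apply Filter.Tendsto.congr' (f₁ := fun _ => c p)
        · filter_upwards [self_mem_nhdsWithin] with z hz
          have hzt : z + t ≠ 0 := by rw [← hp]; exact hz p
          rw [div_self hzt, one_pow, mul_one]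
        · exact tendsto_const_nhds
      · simp only [hp, if_false]
        have hne : -t + a p ≠ 0 := by
          intro hcon
          apply hp
          linear_combination hcon
        have hcont : Filter.Tendsto (fun z : ℂ => c p * ((z + t) / (z + a p)) ^ d)
            (𝓝 (-t)) (𝓝 (c p * ((-t + t) / (-t + a p)) ^ d)) := by
          apply Filter.Tendsto.mul tendsto_const_nhds
          apply Filter.Tendsto.pow
          exact Filter.Tendsto.div ((continuous_id.add continuous_const).tendsto _)
            ((continuous_id.add continuous_const).tendsto _) hne
        have : c p * ((-t + t) / (-t + a p)) ^ d = 0 := by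
          rw [neg_add_cancel, zero_div, zero_pow (by omega), mul_zero]
        rw [this] at hcont
        exact hcont.mono_left nhdsWithin_le_nhds
    have hlim0 : Filter.Tendsto G (𝓝[s] (-t)) (𝓝 0) := by
      apply Filter.Tendsto.congr' (f₁ := fun _ => 0)
      · filter_upwards [self_mem_nhdsWithin] with z hz
        exact (hG0 z hz).symm
      · exact tendsto_const_nhds
    exact (tendsto_nhds_unique hlim hlim0)
  -- Step 3: conclude
  by_contra hcon
  push_neg at hcon
  obtain ⟨j1, hj1⟩ := hcon
  set T : Finset ι := Finset.univ.filter (fun j => lam j ≠ 0) with hT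
  have hTne : T.Nonempty := ⟨j1, by simp [hT, hj1]⟩
  obtain ⟨j0, hj0T, hj0max⟩ := Finset.exists_max_image T (fun j => (μ j).re) hTne
  have hj0 : lam j0 ≠ 0 := by simpa [hT] using hj0T
  set t : ℂ := μ j0 + (starRingEnd ℂ) (μ j0) with ht
  have hst := step2 t
  have hre : ∑ p ∈ Finset.univ.filter (fun p => a p = t), (c p).re = 0 := by
    rw [← Complex.re_sum, hst, Complex.zero_re]
  have hnonneg : ∀ p ∈ Finset.univ.filter (fun p => a p = t), 0 ≤ (c p).re := by
    intro p hp
    rw [Finset.mem_filter] at hp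
    rcases eq_or_ne (lam p.1) 0 with h1 | h1
    · simp [hc, h1]
    rcases eq_or_ne (lam p.2) 0 with h2 | h2
    · simp [hc, h2]
    have hap : a p = t := hp.2
    have hre' : (μ p.1).re + (μ p.2).re = (μ j0).re + (μ j0).re := by
      have := congrArg Complex.re hap
      simpa [ha, ht, Complex.add_re, Complex.conj_re] using this
    have him' : (μ p.1).im - (μ p.2).im = 0 := by
      have := congrArg Complex.im hap
      simpa [ha, ht, Complex.add_im, Complex.conj_im, sub_eq_add_neg] using this
    have h1T : p.1 ∈ T := by simp [hT, h1]
    have h2T : p.2 ∈ T := by simp [hT, h2]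
    have hle1 := hj0max p.1 h1T
    have hle2 := hj0max p.2 h2T
    have hre1 : (μ p.1).re = (μ j0).re := by linarith
    have hre2 : (μ p.2).re = (μ j0).re := by linarith
    have hmu : μ p.1 = μ p.2 := Complex.ext (by rw [hre1, hre2]) (by linarith)
    have hpp : p.1 = p.2 := hμ hmu
    rw [hc]
    simp only [← hpp, Complex.mul_conj, Complex.ofReal_re]
    exact Complex.normSq_nonneg _
  have hall := (Finset.sum_eq_zero_iff_of_nonneg hnonneg).1 hre
  have hmem : (j0, j0) ∈ Finset.univ.filter (fun p : ι × ι => a p = t) := by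
    simp [ha, ht]
  have := hall (j0, j0) hmem
  rw [hc] at this
  simp only [Complex.mul_conj] at this
  rw [Complex.ofReal_re] at this
  exact hj1 (by
    have := Complex.normSq_eq_zero.1 this
    exact absurd this hj0) |>.elim
end

section
/- Let Q be a finite set of positive integers such that for any n, m ∈ Q there exist positive integers α, β with n^α = m^β. Then there exists a positive integer q such that every n ∈ Q is a power of q, i.e., for every n ∈ Q there exists a positive integer α with n = q^α. -/
/-- Key lemma: if `q` is "primitive" (the gcd of its factorization exponents is 1),
`q ≥ 2`, and `q ^ N = m ^ β` with `m, β > 0`, then `m = q ^ (N / β)`. -/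
lemma pow_eq_pow_primitive {q m N β : ℕ} (hq : 2 ≤ q) (hm : 0 < m) (hβ : 0 < β)
    (hprim : q.primeFactors.gcd q.factorization = 1)
    (heq : q ^ N = m ^ β) : m = q ^ (N / β) := by
  have hq0 : q ≠ 0 := by omega
  have hfac : ∀ p : ℕ, β * m.factorization p = N * Nat.factorization q p := by
    intro p
    have := congrArg (fun x => Nat.factorization x p) heq
    simp only [Nat.factorization_pow, Finsupp.smul_apply, smul_eq_mul] at this
    omega
  have hβN : β ∣ N := by
    have h1 : β ∣ q.primeFactors.gcd (fun p => N * Nat.factorization q p) := by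
      apply Finset.dvd_gcd
      intro p _
      exact ⟨m.factorization p, (hfac p).symm⟩
    rw [Finset.gcd_mul_left, hprim, mul_one] at h1
    simpa using h1
  apply Nat.eq_of_factorization_eq hm.ne' (pow_ne_zero _ hq0)
  intro p
  simp only [Nat.factorization_pow, Finsupp.smul_apply, smul_eq_mul]
  have h2 : β * m.factorization p = β * (N / β * Nat.factorization q p) := by
    rw [← mul_assoc, Nat.mul_div_cancel' hβN, hfac p]
  exact Nat.eq_of_mul_eq_mul_left hβ h2

/-- Every `n ≥ 2` is a power of a primitive base. -/
lemma exists_primitive_base {n : ℕ} (hn : 2 ≤ n) :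
    ∃ q k : ℕ, 2 ≤ q ∧ 0 < k ∧ n = q ^ k ∧
      q.primeFactors.gcd q.factorization = 1 := by
  have hn0 : n ≠ 0 := by omega
  set d := n.primeFactors.gcd n.factorization with hd
  have hdvd : ∀ p ∈ n.primeFactors, d ∣ n.factorization p := fun p hp => Finset.gcd_dvd hp
  have hd0 : 0 < d := by
    obtain ⟨p, hp⟩ := (Nat.nonempty_primeFactors.2 (by omega) : n.primeFactors.Nonempty)
    rcases Nat.eq_zero_or_pos d with h0 | h
    · have hz : n.primeFactors.gcd n.factorization = 0 := by rw [← hd]; exact h0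
      have := (Finset.gcd_eq_zero_iff.1 hz) p hp
      have hppos : 0 < n.factorization p := by
        rw [← Nat.support_factorization] at hp
        exact Nat.pos_of_ne_zero (Finsupp.mem_support_iff.1 hp)
      omega
    · exact h
  set q := ∏ p ∈ n.primeFactors, p ^ (n.factorization p / d) with hqdef
  have hqd : q ^ d = n := by
    rw [hqdef, ← Finset.prod_pow]
    have : ∀ p ∈ n.primeFactors, (p ^ (n.factorization p / d)) ^ d = p ^ n.factorization p := by
      intro p hp
      rw [← pow_mul, Nat.div_mul_cancel (hdvd p hp)]
    rw [Finset.prod_congr rfl this]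
    conv_rhs => rw [← Nat.factorization_prod_pow_eq_self hn0]
    rfl
  have hq0 : q ≠ 0 := by
    intro h0
    rw [h0, zero_pow hd0.ne'] at hqd
    omega
  have hq2 : 2 ≤ q := by
    rcases Nat.lt_or_ge q 2 with h | h
    · interval_cases q
      · omega
      · rw [one_pow] at hqd; omega
    · exact h
  have hfq : ∀ p, n.factorization p = d * Nat.factorization q p := by
    intro p
    have := congrArg (fun x => Nat.factorization x p) hqd
    simp only [Nat.factorization_pow, Finsupp.smul_apply, smul_eq_mul] at this
    omega
  have hpf : q.primeFactors = n.primeFactors := by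
    rw [← hqd, Nat.primeFactors_pow _ hd0.ne']
  refine ⟨q, d, hq2, hd0, hqd.symm, ?_⟩
  set g := q.primeFactors.gcd q.factorization with hg
  have hdg : d * g ∣ d := by
    have : d * g ∣ n.primeFactors.gcd n.factorization := by
      apply Finset.dvd_gcd
      intro p hp
      rw [hfq p]
      exact mul_dvd_mul_left d (Finset.gcd_dvd (hpf ▸ hp))
    exact this
  have : g ∣ 1 := (mul_dvd_mul_iff_left hd0.ne').1 (by simpa using hdg)
  exact Nat.dvd_one.1 this

/-- If `Q` is a finite set of positive integers such that any two elements have a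
common power (`n^α = m^β`), then all elements of `Q` are powers of a single
positive integer `q`. -/
theorem common_power_of_pairwise_power
    (Q : Finset ℕ) (hpos : ∀ n ∈ Q, 0 < n)
    (h : ∀ n ∈ Q, ∀ m ∈ Q, ∃ α β : ℕ, 0 < α ∧ 0 < β ∧ n ^ α = m ^ β) :
    ∃ q : ℕ, 0 < q ∧ ∀ n ∈ Q, ∃ α : ℕ, 0 < α ∧ n = q ^ α := by
  by_cases hQ : ∃ n ∈ Q, 2 ≤ n
  · obtain ⟨n0, hn0Q, hn0⟩ := hQ
    have hall : ∀ m ∈ Q, 2 ≤ m := by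
      intro m hm
      by_contra hm2
      have hm1 : m = 1 := by have := hpos m hm; omega
      obtain ⟨α, β, hα, hβ, heq⟩ := h n0 hn0Q m hm
      rw [hm1, one_pow] at heq
      have := Nat.one_lt_pow hα.ne' hn0
      omega
    obtain ⟨q, k, hq2, hk, hn0q, hprim⟩ := exists_primitive_base hn0
    refine ⟨q, by omega, ?_⟩
    intro m hm
    obtain ⟨α, β, hα, hβ, heq⟩ := h n0 hn0Q m hm
    rw [hn0q, ← pow_mul] at heq
    have hmq : m = q ^ (k * α / β) :=
      pow_eq_pow_primitive hq2 (hpos m hm) hβ hprim heq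
    refine ⟨k * α / β, ?_, hmq⟩
    rcases Nat.eq_zero_or_pos (k * α / β) with h0 | h
    · rw [h0, pow_zero] at hmq
      have := hall m hm; omega
    · exact h
  · refine ⟨1, one_pos, fun n hn => ⟨1, one_pos, ?_⟩⟩
    push_neg at hQ
    have := hQ n hn
    have := hpos n hn
    simpa using by omega
end

section
/- Let d ≥ 1 and let w_k be a sequence of complex numbers with Re(w_k) > 0 and Re(w_k) → 0. Then the normalized partial reproducing kernels k_{d,w_k} = K_{d,w_k}/‖K_{d,w_k}‖ converge weakly to 0 in the Hardy space H of Dirichlet series with square-summable coefficients. -/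
open scoped ComplexConjugate
open Filter

/-- Coefficients of the partial reproducing kernel of order `d` at `w`. -/
noncomputable def partialKernelCoef (d : ℕ) (w : ℂ) (n : ℕ) : ℂ :=
  if n ≠ 0 ∧ ∀ p ∈ n.primeFactors, p ≤ Nat.nth Nat.Prime (d - 1) then
    (n : ℂ) ^ (-(conj w)) else 0

/-- The norm of the partial reproducing kernel `K_{d,w}`. -/
noncomputable def partialKernelNorm (d : ℕ) (w : ℂ) : ℝ :=
  Real.sqrt (∏ j ∈ Finset.range d, (1 - (Nat.nth Nat.Prime j : ℝ) ^ (-(2 * w.re)))⁻¹)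

/- ### Auxiliary lemmas -/

lemma aux_summable_mul {u v : ℕ → ℝ} (hu : ∀ n, 0 ≤ u n) (hv : ∀ n, 0 ≤ v n)
    (hu2 : Summable fun n => u n ^ 2) (hv2 : Summable fun n => v n ^ 2) :
    Summable fun n => u n * v n := by
  refine Summable.of_nonneg_of_le (fun n => mul_nonneg (hu n) (hv n)) (fun n => ?_) (hu2.add hv2)
  nlinarith [sq_nonneg (u n - v n), mul_nonneg (hu n) (hv n)]

/-- Cauchy–Schwarz for infinite series. -/
lemma aux_tsum_mul_le {u v : ℕ → ℝ} (hu : ∀ n, 0 ≤ u n) (hv : ∀ n, 0 ≤ v n)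
    (hu2 : Summable fun n => u n ^ 2) (hv2 : Summable fun n => v n ^ 2) :
    ∑' n, u n * v n ≤ Real.sqrt (∑' n, u n ^ 2) * Real.sqrt (∑' n, v n ^ 2) := by
  refine Summable.tsum_le_of_sum_le (aux_summable_mul hu hv hu2 hv2) fun s => ?_
  calc ∑ i ∈ s, u i * v i
      ≤ Real.sqrt (∑ i ∈ s, u i ^ 2) * Real.sqrt (∑ i ∈ s, v i ^ 2) :=
        Real.sum_mul_le_sqrt_mul_sqrt s u v
    _ ≤ Real.sqrt (∑' n, u n ^ 2) * Real.sqrt (∑' n, v n ^ 2) := by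
        gcongr <;> exact Summable.sum_le_tsum s (fun n _ => sq_nonneg _) (by assumption)

lemma aux_tendsto_sqrt_atTop {ι : Type*} {f : ι → ℝ} {l : Filter ι}
    (h : Tendsto f l atTop) : Tendsto (fun x => Real.sqrt (f x)) l atTop := by
  rw [Filter.tendsto_atTop] at h ⊢
  intro b
  filter_upwards [h (max b 0 ^ 2)] with x hx
  calc b ≤ max b 0 := le_max_left _ _
    _ = Real.sqrt (max b 0 ^ 2) := (Real.sqrt_sq (le_max_right _ _)).symm
    _ ≤ _ := Real.sqrt_le_sqrt hx

lemma aux_one_le_prod {s : Finset ℕ} {f : ℕ → ℝ} (h : ∀ i ∈ s, 1 ≤ f i) :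
    (1:ℝ) ≤ ∏ i ∈ s, f i := by
  calc (1:ℝ) = ∏ _i ∈ s, (1:ℝ) := (Finset.prod_const_one).symm
    _ ≤ ∏ i ∈ s, f i := Finset.prod_le_prod (fun i _ => zero_le_one) h

lemma aux_single_le_prod {s : Finset ℕ} {f : ℕ → ℝ} (h : ∀ i ∈ s, 1 ≤ f i)
    {j : ℕ} (hj : j ∈ s) : f j ≤ ∏ i ∈ s, f i := by
  rw [← Finset.mul_prod_erase s f hj]
  exact le_mul_of_one_le_right (by linarith [h j hj])
    (aux_one_le_prod fun i hi => h i (Finset.mem_of_mem_erase hi))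

lemma aux_primesBelow_eq_image (d : ℕ) (hd : 1 ≤ d) :
    Nat.primesBelow (Nat.nth Nat.Prime (d - 1) + 1)
      = (Finset.range d).image (Nat.nth Nat.Prime) := by
  ext q
  simp only [Nat.mem_primesBelow, Finset.mem_image, Finset.mem_range, Nat.lt_succ_iff]
  constructor
  · rintro ⟨hle, hq⟩
    refine ⟨Nat.count Nat.Prime q, ?_, Nat.nth_count hq⟩
    have h1 : Nat.nth Nat.Prime (Nat.count Nat.Prime q) ≤ Nat.nth Nat.Prime (d - 1) := by
      rwa [Nat.nth_count hq]
    have := (Nat.nth_le_nth Nat.infinite_setOf_prime).mp h1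
    omega
  · rintro ⟨j, hj, rfl⟩
    exact ⟨(Nat.nth_le_nth Nat.infinite_setOf_prime).mpr (by omega),
      Nat.prime_nth_prime j⟩

/-- The multiplicative function `n ↦ n ^ (-(2σ))`. -/
noncomputable def auxRpowHom (σ : ℝ) : ℕ →* ℝ where
  toFun n := (n : ℝ) ^ (-(2 * σ))
  map_one' := by simp
  map_mul' m n := by
    push_cast
    exact Real.mul_rpow (Nat.cast_nonneg m) (Nat.cast_nonneg n)

lemma aux_key (d : ℕ) (hd : 1 ≤ d) (w : ℂ) (hw : 0 < w.re) :
    Summable (fun n => ‖partialKernelCoef d w n‖ ^ 2) ∧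
      ∑' n, ‖partialKernelCoef d w n‖ ^ 2 = partialKernelNorm d w ^ 2 ∧
      1 ≤ partialKernelNorm d w := by
  set N := Nat.nth Nat.Prime (d - 1) + 1 with hN
  set σ := w.re with hσ
  set F := auxRpowHom σ with hF
  have hFval : ∀ n : ℕ, F n = (n : ℝ) ^ (-(2 * σ)) := fun n => rfl
  have hFlt : ∀ {p : ℕ}, p.Prime → ‖F p‖ < 1 := by
    intro p hp
    have h1 : (1:ℝ) < p := by exact_mod_cast hp.one_lt
    have hpos : (0:ℝ) < (p:ℝ) ^ (-(2 * σ)) := Real.rpow_pos_of_pos (by linarith) _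
    rw [hFval, Real.norm_eq_abs, abs_of_pos hpos]
    exact Real.rpow_lt_one_of_one_lt_of_neg h1 (by linarith)
  obtain ⟨hsum, hHasSum⟩ :=
    EulerProduct.summable_and_hasSum_smoothNumbers_prod_primesBelow_geometric hFlt N
  -- pointwise identification of the coefficients
  have hmem : ∀ n : ℕ, (n ≠ 0 ∧ ∀ p ∈ n.primeFactors, p ≤ Nat.nth Nat.Prime (d - 1))
      ↔ n ∈ Nat.smoothNumbers N := by
    intro n
    rw [Nat.mem_smoothNumbers_iff_primeFactors_subset]
    constructor
    · rintro ⟨h0, h⟩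
      exact ⟨h0, fun p hp => Nat.mem_primesBelow.mpr
        ⟨Nat.lt_succ_of_le (h p hp), Nat.prime_of_mem_primeFactors hp⟩⟩
    · rintro ⟨h0, h⟩
      exact ⟨h0, fun p hp => Nat.lt_succ_iff.mp (Nat.lt_of_mem_primesBelow (h hp))⟩
  have hcoef : (fun n => ‖partialKernelCoef d w n‖ ^ 2)
      = (Nat.smoothNumbers N).indicator (fun n => (n : ℝ) ^ (-(2 * σ))) := by
    funext n
    by_cases hn : n ∈ Nat.smoothNumbers N
    · rw [Set.indicator_of_mem hn, partialKernelCoef, if_pos ((hmem n).mpr hn)]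
      have hn0 : 0 < n := Nat.pos_of_ne_zero hn.1
      have hpos : (0:ℝ) < (n:ℝ) := by exact_mod_cast hn0
      rw [Complex.norm_natCast_cpow_of_pos hn0]
      have hre : (-(conj w)).re = -σ := by simp [hσ]
      rw [hre, sq, ← Real.rpow_add hpos]
      congr 1
      ring
    · rw [Set.indicator_of_notMem hn, partialKernelCoef, if_neg (fun h => hn ((hmem n).mp h))]
      simp
  -- the product over primes below N equals the product in `partialKernelNorm`
  have hprod : ∏ p ∈ N.primesBelow, (1 - F p)⁻¹
      = ∏ j ∈ Finset.range d, (1 - (Nat.nth Nat.Prime j : ℝ) ^ (-(2 * σ)))⁻¹ := by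
    rw [hN, aux_primesBelow_eq_image d hd,
      Finset.prod_image (fun i _ j _ h => Nat.nth_injective Nat.infinite_setOf_prime h)]
    exact Finset.prod_congr rfl fun j _ => by rw [hFval]
  have hfac : ∀ j ∈ Finset.range d,
      (1:ℝ) ≤ (1 - (Nat.nth Nat.Prime j : ℝ) ^ (-(2 * σ)))⁻¹ := by
    intro j _
    have hp : (Nat.nth Nat.Prime j).Prime := Nat.prime_nth_prime j
    have h1 : (1:ℝ) < (Nat.nth Nat.Prime j : ℝ) := by exact_mod_cast hp.one_lt
    have ht0 : (0:ℝ) < (Nat.nth Nat.Prime j : ℝ) ^ (-(2 * σ)) :=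
      Real.rpow_pos_of_pos (by linarith) _
    have ht1 : (Nat.nth Nat.Prime j : ℝ) ^ (-(2 * σ)) < 1 :=
      Real.rpow_lt_one_of_one_lt_of_neg h1 (by linarith)
    rw [le_inv_comm₀ one_pos (by linarith)]
    linarith
  set Q := ∏ j ∈ Finset.range d, (1 - (Nat.nth Nat.Prime j : ℝ) ^ (-(2 * σ)))⁻¹ with hQ
  have hQ1 : (1:ℝ) ≤ Q := aux_one_le_prod hfac
  have hKnorm : partialKernelNorm d w = Real.sqrt Q := rfl
  have hKsq : partialKernelNorm d w ^ 2 = Q := by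
    rw [hKnorm, Real.sq_sqrt (by linarith)]
  have hsum' : Summable ((Nat.smoothNumbers N).indicator (fun n => (n : ℝ) ^ (-(2 * σ)))) := by
    refine summable_subtype_iff_indicator.mp ?_
    exact hHasSum.summable
  refine ⟨hcoef ▸ hsum', ?_, ?_⟩
  · rw [hcoef, ← tsum_subtype, hKsq, ← hprod]
    exact hHasSum.tsum_eq
  · rw [hKnorm]
    calc (1:ℝ) = Real.sqrt 1 := Real.sqrt_one.symm
      _ ≤ Real.sqrt Q := Real.sqrt_le_sqrt hQ1

lemma aux_coef_le_one (d : ℕ) (w : ℂ) (hw : 0 < w.re) (n : ℕ) :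
    ‖partialKernelCoef d w n‖ ≤ 1 := by
  rw [partialKernelCoef]
  split_ifs with h
  · have hn0 : 0 < n := Nat.pos_of_ne_zero h.1
    rw [Complex.norm_natCast_cpow_of_pos hn0]
    refine Real.rpow_le_one_of_one_le_of_nonpos (by exact_mod_cast hn0) ?_
    simp only [Complex.neg_re, Complex.conj_re]
    linarith
  · simp

set_option maxHeartbeats 1000000 in
/-- The main quantitative bound. -/
lemma aux_main_bound (d : ℕ) (hd : 1 ≤ d) (w : ℂ) (hw : 0 < w.re)
    (a : ℕ → ℂ) (ha : Summable fun n => ‖a n‖ ^ 2) (M : ℕ) :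
    ‖(∑' n : ℕ, a n * conj (partialKernelCoef d w n)) / (partialKernelNorm d w : ℂ)‖
      ≤ (∑ n ∈ Finset.range M, ‖a n‖) / partialKernelNorm d w
        + Real.sqrt (∑' n, ‖a (n + M)‖ ^ 2) := by
  obtain ⟨hb2, hbt, hK1⟩ := aux_key d hd w hw
  set b := partialKernelCoef d w with hb
  set K := partialKernelNorm d w with hK
  have hK0 : (0:ℝ) < K := lt_of_lt_of_le one_pos hK1
  have hnorm_mul : ∀ n, ‖a n * conj (b n)‖ = ‖a n‖ * ‖b n‖ := by
    intro n; rw [norm_mul, RCLike.norm_conj]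
  have hsummul : Summable fun n => ‖a n‖ * ‖b n‖ :=
    aux_summable_mul (fun n => norm_nonneg _) (fun n => norm_nonneg _) ha hb2
  have hf_sum : Summable fun n => a n * conj (b n) := by
    refine Summable.of_norm ?_
    simpa only [hnorm_mul] using hsummul
  -- split the series
  rw [← Summable.sum_add_tsum_nat_add M hf_sum]
  have hdiv : ‖((∑ n ∈ Finset.range M, a n * conj (b n))
        + ∑' n, a (n + M) * conj (b (n + M))) / (K : ℂ)‖
      = ‖(∑ n ∈ Finset.range M, a n * conj (b n))
        + ∑' n, a (n + M) * conj (b (n + M))‖ / K := by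
    rw [norm_div, Complex.norm_real, Real.norm_eq_abs, abs_of_pos hK0]
  rw [hdiv]
  have h1 : ‖∑ n ∈ Finset.range M, a n * conj (b n)‖ ≤ ∑ n ∈ Finset.range M, ‖a n‖ := by
    refine (norm_sum_le _ _).trans ?_
    refine Finset.sum_le_sum fun n _ => ?_
    rw [hnorm_mul]
    calc ‖a n‖ * ‖b n‖ ≤ ‖a n‖ * 1 :=
          mul_le_mul_of_nonneg_left (aux_coef_le_one d w hw n) (norm_nonneg _)
      _ = ‖a n‖ := mul_one _
  -- tail estimate via Cauchy–Schwarz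
  have ha' : Summable fun n => ‖a (n + M)‖ ^ 2 := (summable_nat_add_iff M).mpr ha
  have hb2' : Summable fun n => ‖b (n + M)‖ ^ 2 := (summable_nat_add_iff M).mpr hb2
  have htail_le : ∑' n, ‖b (n + M)‖ ^ 2 ≤ K ^ 2 := by
    have := Summable.sum_add_tsum_nat_add M hb2
    have hfin : (0:ℝ) ≤ ∑ n ∈ Finset.range M, ‖b n‖ ^ 2 :=
      Finset.sum_nonneg fun n _ => sq_nonneg _
    rw [hbt] at this
    linarith
  have h2 : ‖∑' n, a (n + M) * conj (b (n + M))‖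
      ≤ Real.sqrt (∑' n, ‖a (n + M)‖ ^ 2) * K := by
    have hs : Summable fun n => ‖a (n + M)‖ * ‖b (n + M)‖ :=
      aux_summable_mul (fun n => norm_nonneg _) (fun n => norm_nonneg _) ha' hb2'
    calc ‖∑' n, a (n + M) * conj (b (n + M))‖
        ≤ ∑' n, ‖a (n + M) * conj (b (n + M))‖ := norm_tsum_le_tsum_norm (by
          simpa only [hnorm_mul] using hs)
      _ = ∑' n, ‖a (n + M)‖ * ‖b (n + M)‖ := by simp only [hnorm_mul]
      _ ≤ Real.sqrt (∑' n, ‖a (n + M)‖ ^ 2) * Real.sqrt (∑' n, ‖b (n + M)‖ ^ 2) :=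
          aux_tsum_mul_le (fun n => norm_nonneg _) (fun n => norm_nonneg _) ha' hb2'
      _ ≤ Real.sqrt (∑' n, ‖a (n + M)‖ ^ 2) * K := by
          refine mul_le_mul_of_nonneg_left ?_ (Real.sqrt_nonneg _)
          calc Real.sqrt (∑' n, ‖b (n + M)‖ ^ 2) ≤ Real.sqrt (K ^ 2) :=
                Real.sqrt_le_sqrt htail_le
            _ = K := Real.sqrt_sq hK0.le
  calc ‖(∑ n ∈ Finset.range M, a n * conj (b n)) + ∑' n, a (n + M) * conj (b (n + M))‖ / K
      ≤ (‖∑ n ∈ Finset.range M, a n * conj (b n)‖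
          + ‖∑' n, a (n + M) * conj (b (n + M))‖) / K := by
        gcongr
        exact norm_add_le _ _
    _ ≤ ((∑ n ∈ Finset.range M, ‖a n‖) + Real.sqrt (∑' n, ‖a (n + M)‖ ^ 2) * K) / K := by
        gcongr
    _ = (∑ n ∈ Finset.range M, ‖a n‖) / K + Real.sqrt (∑' n, ‖a (n + M)‖ ^ 2) := by
        field_simp

/-- If `Re w_k → 0` (with `Re w_k > 0`), then the normalized partial reproducing
kernels `K_{d,w_k}/‖K_{d,w_k}‖` converge weakly to `0` in `H`: for every
square-summable coefficient sequence `a`, the inner products tend to `0`. -/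
theorem partial_kernels_weakly_null
    (d : ℕ) (hd : 1 ≤ d) (w : ℕ → ℂ) (hw : ∀ k, 0 < (w k).re)
    (hlim : Tendsto (fun k => (w k).re) atTop (nhds 0))
    (a : ℕ → ℂ) (ha : Summable fun n => ‖a n‖ ^ 2) :
    Tendsto
      (fun k => (∑' n : ℕ, a n * conj (partialKernelCoef d (w k) n))
        / (partialKernelNorm d (w k) : ℂ))
      atTop (nhds 0) := by
  -- the norms tend to infinity
  have hexp : Tendsto (fun k => -(2 * (w k).re)) atTop (nhds 0) := by
    have := (hlim.const_mul (2:ℝ)).neg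
    simpa using this
  have hc : ContinuousAt (fun x : ℝ => (2:ℝ) ^ x) 0 :=
    Real.continuousAt_const_rpow two_ne_zero
  have h2pow : Tendsto (fun k => (2:ℝ) ^ (-(2 * (w k).re))) atTop (nhds 1) := by
    have := hc.tendsto.comp hexp
    simpa [Real.rpow_zero, Function.comp_def] using this
  have hbase : Tendsto (fun k => 1 - (2:ℝ) ^ (-(2 * (w k).re))) atTop
      (nhdsWithin 0 (Set.Ioi 0)) := by
    rw [tendsto_nhdsWithin_iff]
    constructor
    · have := (tendsto_const_nhds (x := (1:ℝ)) (f := atTop)).sub h2pow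
      simpa using this
    · refine Eventually.of_forall fun k => ?_
      have : (2:ℝ) ^ (-(2 * (w k).re)) < 1 :=
        Real.rpow_lt_one_of_one_lt_of_neg one_lt_two (by have := hw k; linarith)
      simp only [Set.mem_Ioi]
      linarith
  have hphi : Tendsto (fun k => (1 - (2:ℝ) ^ (-(2 * (w k).re)))⁻¹) atTop atTop :=
    hbase.inv_tendsto_nhdsGT_zero
  have hKsq_ge : ∀ k, (1 - (2:ℝ) ^ (-(2 * (w k).re)))⁻¹ ≤ partialKernelNorm d (w k) ^ 2 := by
    intro k
    obtain ⟨_, _, hK1⟩ := aux_key d hd (w k) (hw k)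
    have hfac : ∀ j ∈ Finset.range d,
        (1:ℝ) ≤ (1 - (Nat.nth Nat.Prime j : ℝ) ^ (-(2 * (w k).re)))⁻¹ := by
      intro j _
      have hp : (Nat.nth Nat.Prime j).Prime := Nat.prime_nth_prime j
      have h1 : (1:ℝ) < (Nat.nth Nat.Prime j : ℝ) := by exact_mod_cast hp.one_lt
      have ht0 : (0:ℝ) < (Nat.nth Nat.Prime j : ℝ) ^ (-(2 * (w k).re)) :=
        Real.rpow_pos_of_pos (by linarith) _
      have ht1 : (Nat.nth Nat.Prime j : ℝ) ^ (-(2 * (w k).re)) < 1 :=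
        Real.rpow_lt_one_of_one_lt_of_neg h1 (by have := hw k; linarith)
      rw [le_inv_comm₀ one_pos (by linarith)]
      linarith
    have h0mem : 0 ∈ Finset.range d := Finset.mem_range.mpr hd
    have hsingle := aux_single_le_prod hfac h0mem
    have hnth0 : Nat.nth Nat.Prime 0 = 2 := Nat.nth_prime_zero_eq_two
    have hQsq : partialKernelNorm d (w k) ^ 2
        = ∏ j ∈ Finset.range d, (1 - (Nat.nth Nat.Prime j : ℝ) ^ (-(2 * (w k).re)))⁻¹ := by
      rw [partialKernelNorm, Real.sq_sqrt]
      have : (1:ℝ) ≤ ∏ j ∈ Finset.range d,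
          (1 - (Nat.nth Nat.Prime j : ℝ) ^ (-(2 * (w k).re)))⁻¹ := aux_one_le_prod hfac
      linarith
    rw [hQsq]
    calc (1 - (2:ℝ) ^ (-(2 * (w k).re)))⁻¹
        = (1 - (Nat.nth Nat.Prime 0 : ℝ) ^ (-(2 * (w k).re)))⁻¹ := by rw [hnth0]; norm_num
      _ ≤ _ := hsingle
  have hKtop : Tendsto (fun k => partialKernelNorm d (w k)) atTop atTop := by
    refine tendsto_atTop_mono (fun k => ?_) (aux_tendsto_sqrt_atTop hphi)
    have h1 := hKsq_ge k
    obtain ⟨_, _, hK1⟩ := aux_key d hd (w k) (hw k)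
    calc Real.sqrt ((1 - (2:ℝ) ^ (-(2 * (w k).re)))⁻¹)
        ≤ Real.sqrt (partialKernelNorm d (w k) ^ 2) := Real.sqrt_le_sqrt h1
      _ = partialKernelNorm d (w k) := Real.sqrt_sq (by linarith)
  -- main ε-argument
  rw [NormedAddCommGroup.tendsto_nhds_zero]
  intro ε hε
  -- choose M with small tail
  have htail : Tendsto (fun M => Real.sqrt (∑' n, ‖a (n + M)‖ ^ 2)) atTop (nhds 0) := by
    have h0 : Tendsto (fun M => ∑' n, ‖a (n + M)‖ ^ 2) atTop (nhds 0) :=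
      tendsto_sum_nat_add (fun n => ‖a n‖ ^ 2)
    have := (Real.continuous_sqrt.continuousAt (x := (0:ℝ))).tendsto.comp h0
    simpa [Real.sqrt_zero, Function.comp_def] using this
  obtain ⟨M, hM⟩ : ∃ M, Real.sqrt (∑' n, ‖a (n + M)‖ ^ 2) < ε / 2 :=
    (htail.eventually (gt_mem_nhds (half_pos hε))).exists
  set C := ∑ n ∈ Finset.range M, ‖a n‖ with hC
  have hC0 : (0:ℝ) ≤ C := Finset.sum_nonneg fun n _ => norm_nonneg _
  have hev : ∀ᶠ k in atTop, 2 * C / ε + 1 ≤ partialKernelNorm d (w k) :=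
    hKtop.eventually_ge_atTop _
  filter_upwards [hev] with k hk
  have hK0 : (0:ℝ) < partialKernelNorm d (w k) := by
    have h' : (0:ℝ) ≤ 2 * C / ε := by positivity
    linarith
  have hbnd := aux_main_bound d hd (w k) (hw k) a ha M
  have hmain : C / partialKernelNorm d (w k) < ε / 2 := by
    rw [div_lt_iff₀ hK0]
    have heq : ε / 2 * (2 * C / ε + 1) = C + ε / 2 := by field_simp
    have hmul := mul_le_mul_of_nonneg_left hk (le_of_lt (half_pos hε))
    nlinarith
  calc ‖(∑' n : ℕ, a n * conj (partialKernelCoef d (w k) n))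
        / (partialKernelNorm d (w k) : ℂ)‖
      ≤ C / partialKernelNorm d (w k) + Real.sqrt (∑' n, ‖a (n + M)‖ ^ 2) := hbnd
    _ < ε / 2 + ε / 2 := add_lt_add hmain hM
    _ = ε := add_halves ε
end

section
/- Let φ(s) = c_1 + c_r r^{-s} with r ≥ 2 an integer, inducing a bounded composition operator C_φ on the Hardy space H of Dirichlet series (so Re c_1 - |c_r| ≥ 1/2). Let q ≥ 2 be an integer such that r^m ≠ q^n for all positive integers n, m. Then for every w with Re w > 0, the adjoint satisfies C_φ*(K_w^{(q)}) = K_{c_1}, where K_{c_1}(s) = ζ(conj(c_1) + s) is the reproducing kernel of H at c_1. -/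
open Filter

private lemma norm_term_eq (dn : ℂ) (n : ℕ) {x : ℝ} (hx : x ≠ 0) :
    ‖dn * (n : ℂ) ^ (-(x:ℂ))‖ = ‖dn‖ * (n:ℝ) ^ (-x) := by
  rcases Nat.eq_zero_or_pos n with h | h
  · subst h
    push_cast
    rw [Complex.zero_cpow (by simpa using hx), Real.zero_rpow (neg_ne_zero.mpr hx)]
    simp
  · rw [norm_mul, Complex.norm_natCast_cpow_of_pos h]
    simp

private lemma dirichlet_unique (d : ℕ → ℂ)
    (h : ∀ᶠ x : ℝ in atTop,
      Summable (fun n : ℕ => ‖d n‖ * (n:ℝ) ^ (-x)) ∧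
      ∑' n : ℕ, d n * (n : ℂ) ^ (-(x:ℂ)) = 0) :
    ∀ n : ℕ, n ≠ 0 → d n = 0 := by
  obtain ⟨x₁, hx₁⟩ := eventually_atTop.mp h
  set x₀ : ℝ := max x₁ 1 with hx₀def
  have hx₀1 : (1:ℝ) ≤ x₀ := le_max_right _ _
  have hprop : ∀ x : ℝ, x₀ ≤ x →
      Summable (fun n : ℕ => ‖d n‖ * (n:ℝ) ^ (-x)) ∧
      ∑' n : ℕ, d n * (n : ℂ) ^ (-(x:ℂ)) = 0 :=
    fun x hx => hx₁ x (le_trans (le_max_left _ _) hx)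
  intro N
  induction N using Nat.strong_induction_on with
  | _ N IH =>
    intro hN0
    have hN1 : 1 ≤ N := Nat.one_le_iff_ne_zero.mpr hN0
    have hNpos : (0:ℝ) < N := by exact_mod_cast hN1
    -- main estimate for x ≥ x₀
    have key : ∀ x : ℝ, x₀ ≤ x →
        ‖d N‖ * (N:ℝ) ^ (-x) ≤ ∑' i : ℕ, ‖d (i + (N+1))‖ * ((i + (N+1) : ℕ):ℝ) ^ (-x) := by
      intro x hx
      have hx1 : (1:ℝ) ≤ x := le_trans hx₀1 hx
      have hxne : x ≠ 0 := by linarith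
      obtain ⟨hsumnorm, hzero⟩ := hprop x hx
      have hsum : Summable (fun n : ℕ => d n * (n : ℂ) ^ (-(x:ℂ))) := by
        apply Summable.of_norm
        apply hsumnorm.congr
        intro n
        exact (norm_term_eq (d n) n hxne).symm
      have hsplit := hsum.sum_add_tsum_nat_add (N+1)
      rw [hzero] at hsplit
      have hfin : ∑ i ∈ Finset.range (N+1), d i * (i : ℂ) ^ (-(x:ℂ))
          = d N * (N : ℂ) ^ (-(x:ℂ)) := by
        apply Finset.sum_eq_single_of_mem N (Finset.self_mem_range_succ N)
        intro i hi hiN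
        rw [Finset.mem_range] at hi
        rcases Nat.eq_zero_or_pos i with h0 | h0
        · subst h0
          push_cast
          rw [Complex.zero_cpow (by simpa using hxne), mul_zero]
        · rw [IH i (by omega) (by omega), zero_mul]
      rw [hfin] at hsplit
      have heq : d N * (N : ℂ) ^ (-(x:ℂ)) = -∑' i : ℕ, d (i + (N+1)) * ((i + (N+1) : ℕ) : ℂ) ^ (-(x:ℂ)) := by
        push_cast at hsplit ⊢
        linear_combination hsplit
      have hsumnorm' : Summable (fun i : ℕ => ‖d (i + (N+1))‖ * ((i + (N+1) : ℕ):ℝ) ^ (-x)) := by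
        have := (summable_nat_add_iff (N+1)).mpr hsumnorm
        exact this.congr (fun i => by push_cast; ring_nf)
      calc ‖d N‖ * (N:ℝ) ^ (-x) = ‖d N * (N : ℂ) ^ (-(x:ℂ))‖ := (norm_term_eq _ _ hxne).symm
        _ = ‖∑' i : ℕ, d (i + (N+1)) * ((i + (N+1) : ℕ) : ℂ) ^ (-(x:ℂ))‖ := by rw [heq, norm_neg]
        _ ≤ ∑' i : ℕ, ‖d (i + (N+1)) * ((i + (N+1) : ℕ) : ℂ) ^ (-(x:ℂ))‖ := by
            apply norm_tsum_le_tsum_norm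
            exact hsumnorm'.congr (fun i => (norm_term_eq _ _ hxne).symm)
        _ = ∑' i : ℕ, ‖d (i + (N+1))‖ * ((i + (N+1) : ℕ):ℝ) ^ (-x) := by
            exact tsum_congr (fun i => norm_term_eq _ _ hxne)
    -- now take x = x₀ + j
    set C : ℝ := ∑' i : ℕ, ‖d (i + (N+1))‖ * ((i + (N+1) : ℕ):ℝ) ^ (-x₀) with hC
    have hsumnorm₀ : Summable (fun i : ℕ => ‖d (i + (N+1))‖ * ((i + (N+1) : ℕ):ℝ) ^ (-x₀)) := by
      have := (summable_nat_add_iff (N+1)).mpr (hprop x₀ le_rfl).1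
      exact this.congr (fun i => by push_cast; ring_nf)
    have hCnonneg : 0 ≤ C := tsum_nonneg (fun i => by positivity)
    have bound : ∀ j : ℕ, ‖d N‖ ≤ (N:ℝ) ^ x₀ * C * ((N:ℝ)/(N+1)) ^ j := by
      intro j
      have hx : x₀ ≤ x₀ + j := by simp
      have hkey := key (x₀ + j) hx
      have step : ∑' i : ℕ, ‖d (i + (N+1))‖ * ((i + (N+1) : ℕ):ℝ) ^ (-(x₀ + j))
          ≤ C * ((N:ℝ)+1) ^ (-(j:ℝ)) := by
        rw [hC, ← Summable.tsum_mul_right _ hsumnorm₀]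
        apply Summable.tsum_le_tsum _ _ (hsumnorm₀.mul_right _)
        · intro i
          have hnpos : (0:ℝ) < ((i + (N+1) : ℕ):ℝ) := by positivity
          have h1 : ((i + (N+1) : ℕ):ℝ) ^ (-(x₀ + j))
              = ((i + (N+1) : ℕ):ℝ) ^ (-x₀) * ((i + (N+1) : ℕ):ℝ) ^ (-(j:ℝ)) := by
            rw [← Real.rpow_add hnpos]; ring_nf
          rw [h1, ← mul_assoc]
          apply mul_le_mul_of_nonneg_left _ (by positivity)
          apply Real.rpow_le_rpow_of_nonpos (by positivity) _ (by simp)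
          push_cast; linarith
        · have := (summable_nat_add_iff (N+1)).mpr (hprop (x₀ + j) hx).1
          exact this.congr (fun i => by push_cast; ring_nf)
      have h2 : ‖d N‖ * (N:ℝ) ^ (-(x₀ + (j:ℝ))) ≤ C * ((N:ℝ)+1) ^ (-(j:ℝ)) :=
        le_trans hkey step
      have h3 := mul_le_mul_of_nonneg_right h2 (le_of_lt (Real.rpow_pos_of_pos hNpos (x₀ + j)))
      have h4 : ‖d N‖ * (N:ℝ) ^ (-(x₀ + (j:ℝ))) * (N:ℝ) ^ (x₀ + (j:ℝ)) = ‖d N‖ := by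
        rw [mul_assoc, ← Real.rpow_add hNpos, neg_add_cancel, Real.rpow_zero, mul_one]
      rw [h4] at h3
      refine le_trans h3 (le_of_eq ?_)
      have hN1pos : (0:ℝ) < (N:ℝ) + 1 := by positivity
      rw [Real.rpow_add hNpos, Real.rpow_natCast, Real.rpow_neg (le_of_lt hN1pos),
        Real.rpow_natCast, div_pow]
      field_simp
    have hlim : Filter.Tendsto (fun j : ℕ => (N:ℝ) ^ x₀ * C * ((N:ℝ)/(N+1)) ^ j) atTop (nhds 0) := by
      have hr0 : (0:ℝ) ≤ (N:ℝ)/(N+1) := by positivity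
      have hr1 : (N:ℝ)/(N+1) < 1 := by
        rw [div_lt_one (by positivity)]; linarith
      simpa using (tendsto_pow_atTop_nhds_zero_of_lt_one hr0 hr1).const_mul ((N:ℝ) ^ x₀ * C)
    have : ‖d N‖ ≤ 0 := ge_of_tendsto' hlim bound
    simpa using le_antisymm this (norm_nonneg _)

open scoped ComplexConjugate

private lemma conj_natCast_cpow (n : ℕ) (y : ℂ) :
    conj ((n : ℂ) ^ (conj y)) = (n : ℂ) ^ y := by
  rcases Nat.eq_zero_or_pos n with h | h
  · subst h
    rcases eq_or_ne y 0 with hy | hy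
    · simp [hy]
    · push_cast
      rw [Complex.zero_cpow hy, Complex.zero_cpow (by simpa using hy)]
      simp
  · have harg : ((n:ℂ)).arg ≠ Real.pi := by
      rw [Complex.natCast_arg]
      exact fun hc => Real.pi_ne_zero hc.symm
    have := Complex.conj_cpow (n : ℂ) y harg
    rw [Complex.conj_natCast] at this
    exact this.symm

private lemma rpow_pow_comm {y : ℝ} (hy : 0 < y) (p : ℝ) (k : ℕ) :
    ((y ^ k : ℝ)) ^ p = (y ^ p) ^ k := by
  rw [← Real.rpow_natCast y k, ← Real.rpow_mul hy.le, mul_comm, Real.rpow_mul hy.le,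
    Real.rpow_natCast]


namespace AdjGeom

noncomputable def Gf (a : ℕ → ℂ) (c₁ z : ℂ) (n k : ℕ) : ℂ :=
  a n * (n:ℂ) ^ (-c₁) * (z * (Real.log n : ℂ)) ^ k / (k.factorial : ℂ)

noncomputable def tf (a : ℕ → ℂ) (c₁ cr : ℂ) (k : ℕ) : ℂ :=
  ∑' n : ℕ, Gf a c₁ (-cr) n k

noncomputable def cf (a : ℕ → ℂ) (c₁ cr : ℂ) (r n : ℕ) : ℂ :=
  if r ^ (Nat.log r n) = n then tf a c₁ cr (Nat.log r n) else 0

variable {a : ℕ → ℂ} {c₁ cr z : ℂ}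

lemma normGf (a : ℕ → ℂ) (c₁ z : ℂ) (n k : ℕ) :
    ‖Gf a c₁ z n k‖ = ‖a n‖ * ‖(n:ℂ) ^ (-c₁)‖ * (‖z‖ * Real.log n) ^ k / (k.factorial : ℝ) := by
  simp only [Gf]
  rw [norm_div, norm_mul (a n * (n:ℂ) ^ (-c₁)), norm_pow, norm_mul z, Complex.norm_real,
    Real.norm_eq_abs, abs_of_nonneg (Real.log_natCast_nonneg n), Complex.norm_natCast,
    norm_mul]

lemma Gf_zero (ha0 : a 0 = 0) (z : ℂ) (k : ℕ) : Gf a c₁ z 0 k = 0 := by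
  simp [Gf, ha0]

lemma row_sum (a : ℕ → ℂ) (c₁ z : ℂ) (n : ℕ) : Summable (fun k => ‖Gf a c₁ z n k‖) := by
  have base : Summable (fun k : ℕ => (‖a n‖ * ‖(n:ℂ) ^ (-c₁)‖) *
      ((‖z‖ * Real.log n) ^ k / (k.factorial : ℝ))) :=
    (Real.summable_pow_div_factorial _).mul_left _
  exact base.congr (fun k => by rw [normGf]; ring)

lemma Asum (ha : Summable fun n => ‖a n‖ ^ 2) {σ : ℝ} (hσ : 1/2 < σ) :
    Summable (fun n : ℕ => ‖a n‖ * (n:ℝ) ^ (-σ)) := by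
  have h2σ : Summable (fun n : ℕ => ((n:ℝ) ^ (-σ)) ^ 2) := by
    have h1 : Summable (fun n : ℕ => (n:ℝ) ^ ((-σ) * (2:ℕ))) := by
      apply Real.summable_nat_rpow.mpr
      push_cast; linarith
    apply h1.congr
    intro n
    rw [Real.rpow_mul (by positivity) _ ((2:ℕ):ℝ), Real.rpow_natCast]
  refine Summable.of_nonneg_of_le (fun n => by positivity) (fun n => ?_)
    ((ha.add h2σ).div_const 2)
  have h2 := two_mul_le_add_sq (‖a n‖) ((n:ℝ) ^ (-σ))
  have h3 : (0:ℝ) ≤ ‖a n‖ * (n:ℝ) ^ (-σ) := by positivity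
  nlinarith

lemma norm_cpow_eq (c₁ : ℂ) {n : ℕ} (hn : 0 < n) : ‖(n:ℂ) ^ (-c₁)‖ = (n:ℝ) ^ (-c₁.re) := by
  rw [Complex.norm_natCast_cpow_of_pos hn]
  simp

lemma row_bound (ha0 : a 0 = 0) {δ : ℝ} (hδpos : 0 < δ) (hz : ‖z‖ ≤ δ) (n : ℕ) :
    (∑' k : ℕ, ‖Gf a c₁ z n k‖) ≤ ‖a n‖ * (n:ℝ) ^ (-(c₁.re - δ)) := by
  rcases Nat.eq_zero_or_pos n with h0 | h0
  · subst h0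
    have hterm : ∀ k : ℕ, ‖Gf a c₁ z 0 k‖ = (0:ℝ) := fun k => by rw [Gf_zero ha0]; simp
    have hz0 : (∑' k : ℕ, ‖Gf a c₁ z 0 k‖) = 0 := by rw [tsum_congr hterm, tsum_zero]
    rw [hz0]; simp [ha0]
  · have hn1 : (1:ℝ) ≤ (n:ℝ) := by exact_mod_cast h0
    have heval : (∑' k : ℕ, ‖Gf a c₁ z n k‖)
        = ‖a n‖ * ‖(n:ℂ) ^ (-c₁)‖ * Real.exp (‖z‖ * Real.log n) := by
      rw [Real.exp_eq_exp_ℝ, NormedSpace.exp_eq_tsum_div, ← tsum_mul_left]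
      exact tsum_congr (fun k => by rw [normGf]; ring)
    rw [heval, norm_cpow_eq c₁ h0]
    have hexp : Real.exp (‖z‖ * Real.log n) ≤ (n:ℝ) ^ δ := by
      have he : Real.exp (‖z‖ * Real.log n) = (n:ℝ) ^ (‖z‖) := by
        rw [Real.rpow_def_of_pos (by positivity), mul_comm]
      rw [he]
      exact Real.rpow_le_rpow_of_exponent_le hn1 hz
    calc ‖a n‖ * (n:ℝ) ^ (-c₁.re) * Real.exp (‖z‖ * Real.log n)
        ≤ ‖a n‖ * (n:ℝ) ^ (-c₁.re) * (n:ℝ) ^ δ := by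
          apply mul_le_mul_of_nonneg_left hexp (by positivity)
      _ = ‖a n‖ * (n:ℝ) ^ (-(c₁.re - δ)) := by
          rw [mul_assoc, ← Real.rpow_add (by positivity : (0:ℝ) < (n:ℝ))]
          ring_nf

lemma Gsum (ha0 : a 0 = 0) (ha : Summable fun n => ‖a n‖ ^ 2) {δ : ℝ} (hδpos : 0 < δ)
    (hσ' : 1/2 < c₁.re - δ) (hz : ‖z‖ ≤ δ) :
    Summable (fun p : ℕ × ℕ => ‖Gf a c₁ z p.1 p.2‖) := by
  apply (summable_prod_of_nonneg (fun p => norm_nonneg _)).mpr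
  exact ⟨fun n => row_sum a c₁ z n,
    Summable.of_nonneg_of_le (fun n => tsum_nonneg (fun k => norm_nonneg _))
      (row_bound ha0 hδpos hz) (Asum ha hσ')⟩

lemma tk_summable (ha0 : a 0 = 0) (ha : Summable fun n => ‖a n‖ ^ 2) {δ : ℝ} (hδpos : 0 < δ)
    (hσ' : 1/2 < c₁.re - δ) (z : ℂ) (k : ℕ) :
    Summable (fun n => ‖Gf a c₁ z n k‖) := by
  refine Summable.of_nonneg_of_le (fun n => norm_nonneg _) (fun n => ?_)
    ((Asum ha hσ').mul_left ((‖z‖ * (((k:ℝ)+1)/δ)) ^ k / (k.factorial : ℝ)))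
  rcases Nat.eq_zero_or_pos n with h0 | h0
  · subst h0
    rw [Gf_zero ha0]
    simp only [norm_zero]
    positivity
  · have hn1 : (1:ℝ) ≤ (n:ℝ) := by exact_mod_cast h0
    have hlogk : (Real.log n) ^ k ≤ (((k:ℝ)+1)/δ) ^ k * (n:ℝ) ^ δ := by
      set ε : ℝ := δ / ((k:ℝ)+1) with hεdef
      have hεpos : 0 < ε := by positivity
      have h1 : Real.log n ≤ (n:ℝ) ^ ε / ε :=
        Real.log_le_rpow_div (by positivity) hεpos
      have h2 : (Real.log n) ^ k ≤ ((n:ℝ) ^ ε / ε) ^ k :=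
        pow_le_pow_left₀ (Real.log_natCast_nonneg n) h1 k
      calc (Real.log n) ^ k ≤ ((n:ℝ) ^ ε / ε) ^ k := h2
        _ = ((n:ℝ) ^ ε) ^ k * (1/ε) ^ k := by rw [div_pow]; ring
        _ ≤ ((n:ℝ) ^ δ) * (1/ε) ^ k := by
            apply mul_le_mul_of_nonneg_right _ (by positivity)
            rw [← Real.rpow_natCast ((n:ℝ) ^ ε) k, ← Real.rpow_mul (by positivity)]
            apply Real.rpow_le_rpow_of_exponent_le hn1
            rw [hεdef]
            rw [div_mul_eq_mul_div, div_le_iff₀ (by positivity)]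
            nlinarith [Nat.cast_nonneg (α := ℝ) k, hδpos]
        _ = (((k:ℝ)+1)/δ) ^ k * (n:ℝ) ^ δ := by rw [hεdef, one_div_div]; ring
    rw [normGf, norm_cpow_eq c₁ h0]
    calc ‖a n‖ * (n:ℝ) ^ (-c₁.re) * (‖z‖ * Real.log n) ^ k / (k.factorial : ℝ)
        = ‖a n‖ * (n:ℝ) ^ (-c₁.re) * ‖z‖ ^ k / (k.factorial : ℝ) * (Real.log n) ^ k := by
          rw [mul_pow]; ring
      _ ≤ ‖a n‖ * (n:ℝ) ^ (-c₁.re) * ‖z‖ ^ k / (k.factorial : ℝ)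
            * ((((k:ℝ)+1)/δ) ^ k * (n:ℝ) ^ δ) := by
          apply mul_le_mul_of_nonneg_left hlogk (by positivity)
      _ = (‖z‖ * (((k:ℝ)+1)/δ)) ^ k / (k.factorial : ℝ) * (‖a n‖ * (n:ℝ) ^ (-(c₁.re - δ))) := by
          rw [mul_pow, show -(c₁.re - δ) = -c₁.re + δ by ring,
            Real.rpow_add (by positivity : (0:ℝ) < (n:ℝ))]
          ring

lemma cf_pow {a : ℕ → ℂ} {c₁ cr : ℂ} {r : ℕ} (hr1 : 1 < r) (k : ℕ) :
    cf a c₁ cr r (r ^ k) = tf a c₁ cr k := by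
  simp [cf, Nat.log_pow hr1]

lemma cf_not {a : ℕ → ℂ} {c₁ cr : ℂ} {r : ℕ} (n : ℕ) (hn : ∀ k : ℕ, r ^ k ≠ n) :
    cf a c₁ cr r n = 0 := by
  simp [cf, hn (Nat.log r n)]

lemma key_at (r : ℕ) (hr : 2 ≤ r) (c₁ cr : ℂ) (hcr : cr ≠ 0)
    (hσ' : 1/2 < c₁.re - ‖cr‖/2)
    (a : ℕ → ℂ) (ha0 : a 0 = 0) (ha : Summable fun n => ‖a n‖ ^ 2)
    (x : ℝ) (hx1 : 1 ≤ x) (hεx : ‖cr‖ * (r:ℝ) ^ (-x) ≤ ‖cr‖/2) :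
    Summable (fun n : ℕ => ‖cf a c₁ cr r n‖ * (n:ℝ) ^ (-x)) ∧
    ∑' n : ℕ, cf a c₁ cr r n * (n:ℂ) ^ (-(x:ℂ))
      = ∑' n : ℕ, a n * (n:ℂ) ^ (-(c₁ + cr * (r:ℂ) ^ (-(x:ℂ)))) := by
  have hrpos : 0 < r := by omega
  have hr1 : 1 < r := by omega
  have hxne : x ≠ 0 := by linarith
  have hcrpos : 0 < ‖cr‖ := norm_pos_iff.mpr hcr
  set δ : ℝ := ‖cr‖/2 with hδdef
  have hδpos : 0 < δ := by positivity
  have hrinj : Function.Injective (fun k : ℕ => r ^ k) := Nat.pow_right_injective hr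
  set ρ : ℂ := (r:ℂ) ^ (-(x:ℂ)) with hρdef
  have hρnorm : ‖ρ‖ = (r:ℝ) ^ (-x) := by
    rw [hρdef, Complex.norm_natCast_cpow_of_pos hrpos]
    simp
  set u : ℂ := (-cr) * ρ with hudef
  have hunorm : ‖u‖ ≤ δ := by
    rw [hudef, norm_mul, norm_neg, hρnorm]; exact hεx
  have hFabs : Summable (fun p : ℕ × ℕ => ‖Gf a c₁ u p.1 p.2‖) :=
    Gsum ha0 ha hδpos hσ' hunorm
  have hGsplit : ∀ n k, Gf a c₁ u n k = Gf a c₁ (-cr) n k * ρ ^ k := by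
    intro n k
    simp only [Gf, hudef]
    rw [show (-cr * ρ) * (Real.log n : ℂ) = ((-cr) * (Real.log n : ℂ)) * ρ by ring,
      mul_pow]
    ring
  have hGnormsplit : ∀ n k, ‖Gf a c₁ u n k‖ = ‖Gf a c₁ (-cr) n k‖ * ((r:ℝ) ^ (-x)) ^ k := by
    intro n k
    rw [hGsplit, norm_mul, norm_pow, hρnorm]
  have hρreal : ρ = (((r:ℝ) ^ (-x) : ℝ) : ℂ) := by
    rw [hρdef, show ((r:ℕ):ℂ) = (((r:ℕ):ℝ):ℂ) by push_cast; ring,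
      show -(x:ℂ) = ((-x : ℝ) : ℂ) by push_cast; ring,
      ← Complex.ofReal_cpow (by positivity) (-x)]
  have hρpow : ∀ k : ℕ, ((r ^ k : ℕ) : ℂ) ^ (-(x:ℂ)) = ρ ^ k := by
    intro k
    rw [show ((r ^ k : ℕ):ℂ) = (((r ^ k : ℕ):ℝ):ℂ) by push_cast; ring,
      show -(x:ℂ) = ((-x : ℝ) : ℂ) by push_cast; ring,
      ← Complex.ofReal_cpow (by positivity) (-x), hρreal, ← Complex.ofReal_pow]
    congr 1
    rw [show ((r ^ k : ℕ):ℝ) = ((r:ℝ)) ^ k by push_cast; ring,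
      rpow_pow_comm (by positivity : (0:ℝ) < (r:ℝ)) (-x) k]
  have hTk : ∀ k : ℕ, Summable (fun n => ‖Gf a c₁ (-cr) n k‖) :=
    fun k => tk_summable ha0 ha hδpos hσ' (-cr) k
  have hcolsum : Summable (fun k : ℕ => ∑' n : ℕ, ‖Gf a c₁ u n k‖) := by
    have hFabs' : Summable (fun p : ℕ × ℕ => ‖Gf a c₁ u p.2 p.1‖) :=
      ((Equiv.prodComm ℕ ℕ).summable_iff).mpr hFabs
    exact ((summable_prod_of_nonneg (fun p => norm_nonneg _)).mp hFabs').2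
  have hcsumnorm : Summable (fun n : ℕ => ‖cf a c₁ cr r n‖ * (n:ℝ) ^ (-x)) := by
    rw [← Function.Injective.summable_iff hrinj ?_]
    · refine Summable.of_nonneg_of_le
        (fun k => by simp only [Function.comp_apply]; positivity) (fun k => ?_) hcolsum
      simp only [Function.comp_apply]
      rw [cf_pow hr1]
      have h1 : ‖tf a c₁ cr k‖ ≤ ∑' n : ℕ, ‖Gf a c₁ (-cr) n k‖ :=
        norm_tsum_le_tsum_norm (hTk k)
      have h2 : ((r ^ k : ℕ):ℝ) ^ (-x) = ((r:ℝ) ^ (-x)) ^ k := by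
        rw [show ((r ^ k : ℕ):ℝ) = ((r:ℝ)) ^ k by push_cast; ring,
          rpow_pow_comm (by positivity : (0:ℝ) < (r:ℝ)) (-x) k]
      rw [h2]
      calc ‖tf a c₁ cr k‖ * ((r:ℝ) ^ (-x)) ^ k
          ≤ (∑' n : ℕ, ‖Gf a c₁ (-cr) n k‖) * ((r:ℝ) ^ (-x)) ^ k := by
            apply mul_le_mul_of_nonneg_right h1 (by positivity)
        _ = ∑' n : ℕ, ‖Gf a c₁ u n k‖ := by
            exact ((hTk k).tsum_mul_right (((r:ℝ) ^ (-x)) ^ k)).symm.trans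
              (tsum_congr (fun n => (hGnormsplit n k).symm))
    · intro n hn
      have hne : ∀ k : ℕ, r ^ k ≠ n := fun k hk => hn ⟨k, hk⟩
      simp [cf_not n hne]
  refine ⟨hcsumnorm, ?_⟩
  have hE1 : ∀ n : ℕ, a n * (n:ℂ) ^ (-(c₁ + cr * ρ)) = ∑' k : ℕ, Gf a c₁ u n k := by
    intro n
    rcases Nat.eq_zero_or_pos n with h0 | h0
    · subst h0
      rw [ha0, zero_mul, tsum_congr (fun k => Gf_zero ha0 u k), tsum_zero]
    · have hn0 : ((n:ℕ):ℂ) ≠ 0 := Nat.cast_ne_zero.mpr (by omega)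
      rw [show -(c₁ + cr * ρ) = -c₁ + -(cr * ρ) by ring, Complex.cpow_add _ _ hn0,
        Complex.cpow_def_of_ne_zero hn0 (-(cr * ρ)),
        show ((n:ℕ):ℂ) = (((n:ℕ):ℝ):ℂ) by push_cast; ring,
        ← Complex.ofReal_log (Nat.cast_nonneg n),
        Complex.exp_eq_exp_ℂ, NormedSpace.exp_eq_tsum_div, ← mul_assoc, ← tsum_mul_left]
      apply tsum_congr
      intro k
      simp only [Gf, hudef]
      rw [show ((Real.log n : ℂ)) * (-(cr * ρ)) = (-cr * ρ) * (Real.log n : ℂ) by ring]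
      push_cast
      ring
  have hswap : ∑' k : ℕ, ∑' n : ℕ, Gf a c₁ u n k = ∑' n : ℕ, ∑' k : ℕ, Gf a c₁ u n k := by
    apply Summable.tsum_comm' (Summable.of_norm ?_)
      (fun n => Summable.of_norm (row_sum a c₁ u n)) (fun k => Summable.of_norm ?_)
    · exact hFabs
    · exact hFabs.comp_injective (i := fun n => (n, k))
        (fun n₁ n₂ h => by simpa using h)
  have hsupp : Function.support (fun n : ℕ => cf a c₁ cr r n * (n:ℂ) ^ (-(x:ℂ)))
      ⊆ Set.range (fun k : ℕ => r ^ k) := by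
    intro n hn
    by_contra hcon
    apply hn
    have hne : ∀ k : ℕ, r ^ k ≠ n := fun k hk => hcon ⟨k, hk⟩
    simp [cf_not n hne]
  calc ∑' n : ℕ, cf a c₁ cr r n * (n:ℂ) ^ (-(x:ℂ))
      = ∑' k : ℕ, cf a c₁ cr r (r ^ k) * ((r ^ k : ℕ):ℂ) ^ (-(x:ℂ)) :=
        (Function.Injective.tsum_eq hrinj hsupp).symm
    _ = ∑' k : ℕ, tf a c₁ cr k * ρ ^ k := by
        exact tsum_congr (fun k => by rw [cf_pow hr1, hρpow])
    _ = ∑' k : ℕ, ∑' n : ℕ, Gf a c₁ u n k := by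
        apply tsum_congr
        intro k
        simp only [tf]
        exact ((Summable.of_norm (hTk k)).tsum_mul_right (ρ ^ k)).symm.trans
          (tsum_congr (fun n => (hGsplit n k).symm))
    _ = ∑' n : ℕ, ∑' k : ℕ, Gf a c₁ u n k := hswap
    _ = ∑' n : ℕ, a n * (n:ℂ) ^ (-(c₁ + cr * ρ)) :=
        tsum_congr (fun n => (hE1 n).symm)

end AdjGeom

set_option maxHeartbeats 1000000 in
/-- Adjoint action on geometric kernels for multiplicatively independent bases:
if `φ(s) = c₁ + c_r r^{-s}` induces a bounded composition operator on `H`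
(`Re c₁ - |c_r| ≥ 1/2`) and `r^m ≠ q^n` for all positive `m, n`, then
`C_φ*(K_w^{(q)}) = K_{c₁}`, i.e. `⟨C_φ f, K_w^{(q)}⟩ = ⟨f, K_{c₁}⟩` for every
`f = Σ a_n n^{-s}` in `H`, where `b` denotes the coefficient sequence of `f ∘ φ`. -/
theorem adjoint_geometric_kernel_independent
    (r : ℕ) (hr : 2 ≤ r) (q : ℕ) (hq : 2 ≤ q)
    (hpow : ∀ m n : ℕ, 0 < m → 0 < n → r ^ m ≠ q ^ n)
    (c₁ cr : ℂ) (hGH : 1 / 2 ≤ c₁.re - ‖cr‖)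
    (w : ℂ) (hw : 0 < w.re)
    (a : ℕ → ℂ) (ha0 : a 0 = 0) (ha : Summable fun n => ‖a n‖ ^ 2)
    (b : ℕ → ℂ) (hb0 : b 0 = 0) (hb : Summable fun n => ‖b n‖ ^ 2)
    (σ₀ : ℝ)
    (hbconv : ∀ s : ℂ, σ₀ < s.re → Summable fun n : ℕ => ‖b n‖ * (n : ℝ) ^ (-s.re))
    (hcomp : ∀ s : ℂ, σ₀ < s.re →
      ∑' n : ℕ, b n * (n : ℂ) ^ (-s)
        = ∑' n : ℕ, a n * (n : ℂ) ^ (-(c₁ + cr * (r : ℂ) ^ (-s)))) :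
    ∑' m : ℕ, b (q ^ m) * conj ((q : ℂ) ^ (-(m : ℂ) * conj w))
      = ∑' n : ℕ, a n * conj ((n : ℂ) ^ (-(conj c₁))) := by
  have hc₁re : (1:ℝ)/2 ≤ c₁.re := by
    have := norm_nonneg cr; linarith
  have hc₁ne : c₁ ≠ 0 := by
    intro hc; rw [hc] at hc₁re; norm_num at hc₁re
  suffices h : b 1 = (∑' n : ℕ, a n * (n:ℂ) ^ (-c₁)) ∧ ∀ m : ℕ, m ≠ 0 → b (q ^ m) = 0 by
    obtain ⟨hb1, hbq⟩ := h
    rw [tsum_eq_single 0 (fun m hm => by rw [hbq m hm, zero_mul])]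
    have h0 : (q:ℂ) ^ (-((0:ℕ):ℂ) * conj w) = 1 := by
      norm_num
    rw [h0, pow_zero, map_one, mul_one, hb1]
    apply tsum_congr
    intro n
    congr 1
    rw [show -(conj c₁) = conj (-c₁) by rw [map_neg]]
    exact (conj_natCast_cpow n (-c₁)).symm
  rcases eq_or_ne cr 0 with hcr | hcr
  · -- degenerate case : composition is constant-plus-nothing, c supported at 1
    set T : ℂ := ∑' n : ℕ, a n * (n:ℂ) ^ (-c₁) with hT
    set c : ℕ → ℂ := fun n => if n = 1 then T else 0 with hc
    have hcsum : ∀ x : ℝ, Summable (fun n : ℕ => c n * (n:ℂ) ^ (-(x:ℂ))) := by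
      intro x
      apply summable_of_ne_finset_zero (s := {1})
      intro n hn
      simp only [Finset.mem_singleton] at hn
      simp [hc, hn]
    have hckey : ∀ n : ℕ, n ≠ 0 → b n = c n := by
      have := dirichlet_unique (fun n => b n - c n) ?_
      · intro n hn; have := this n hn; linear_combination this
      · filter_upwards [Filter.eventually_gt_atTop σ₀, Filter.eventually_ge_atTop (1:ℝ)]
          with x hx hx1
        have hxne : x ≠ 0 := by linarith
        have hbsum : Summable (fun n : ℕ => b n * (n:ℂ) ^ (-(x:ℂ))) := by
          apply Summable.of_norm
          exact (hbconv (x:ℂ) (by simpa using hx)).congr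
            (fun n => (norm_term_eq (b n) n hxne).symm)
        constructor
        · refine Summable.of_nonneg_of_le (fun n => by positivity)
            (f := fun n => ‖b n‖ * (n:ℝ)^(-x) + ‖c n‖ * (n:ℝ)^(-x)) (fun n => ?_) ?_
          · have h1 : ‖b n - c n‖ ≤ ‖b n‖ + ‖c n‖ := norm_sub_le _ _
            calc ‖b n - c n‖ * (n:ℝ)^(-x) ≤ (‖b n‖ + ‖c n‖) * (n:ℝ)^(-x) := by
                  apply mul_le_mul_of_nonneg_right h1 (by positivity)
              _ = ‖b n‖ * (n:ℝ)^(-x) + ‖c n‖ * (n:ℝ)^(-x) := by ring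
          · apply Summable.add
            · simpa using hbconv (x:ℂ) (by simpa using hx)
            · apply summable_of_ne_finset_zero (s := {1})
              intro n hn
              simp only [Finset.mem_singleton] at hn
              simp [hc, hn]
        · have hsplit : ∑' n : ℕ, (b n - c n) * (n:ℂ) ^ (-(x:ℂ))
              = (∑' n : ℕ, b n * (n:ℂ) ^ (-(x:ℂ))) - ∑' n : ℕ, c n * (n:ℂ) ^ (-(x:ℂ)) := by
            rw [← Summable.tsum_sub hbsum (hcsum x)]
            exact tsum_congr (fun n => by ring)
          rw [hsplit, hcomp (x:ℂ) (by simpa using hx)]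
          have hcval : ∑' n : ℕ, c n * (n:ℂ) ^ (-(x:ℂ)) = T := by
            rw [tsum_eq_single 1 (fun n hn => by simp [hc, hn])]
            simp [hc]
          rw [hcval, hcr]
          simp [hT]
    constructor
    · rw [hckey 1 one_ne_zero]; simp [hc]
    · intro m hm
      rw [hckey (q^m) (by positivity)]
      have : q ^ m ≠ 1 := Nat.ne_of_gt (Nat.one_lt_pow hm (by omega))
      simp [hc, this, hm, show q ≠ 1 by omega]
  · -- main case `cr ≠ 0`
    have hrpos : 0 < r := by omega
    have hr1 : 1 < r := by omega
    have hcrpos : 0 < ‖cr‖ := norm_pos_iff.mpr hcr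
    have hσ' : 1/2 < c₁.re - ‖cr‖/2 := by linarith
    have hδpos : (0:ℝ) < ‖cr‖/2 := by positivity
    have hev : ∀ᶠ x : ℝ in Filter.atTop, ‖cr‖ * (r:ℝ) ^ (-x) ≤ ‖cr‖/2 := by
      have hlogr : 0 < Real.log r := Real.log_pos (by exact_mod_cast hr1)
      have h2 : Filter.Tendsto (fun x : ℝ => (r:ℝ) ^ (-x)) Filter.atTop (nhds 0) := by
        have h3 : Filter.Tendsto (fun x : ℝ => Real.log r * (-x)) Filter.atTop Filter.atBot :=
          Filter.Tendsto.const_mul_atBot hlogr tendsto_neg_atTop_atBot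
        apply (Real.tendsto_exp_atBot.comp h3).congr
        intro x
        simp only [Function.comp_apply]
        rw [Real.rpow_def_of_pos (by positivity : (0:ℝ) < (r:ℝ))]
      have h1 : Filter.Tendsto (fun x : ℝ => ‖cr‖ * (r:ℝ) ^ (-x)) Filter.atTop (nhds 0) := by
        simpa using h2.const_mul ‖cr‖
      exact (h1.eventually_lt_const hδpos).mono (fun x hx => le_of_lt hx)
    have hckey : ∀ n : ℕ, n ≠ 0 → b n = AdjGeom.cf a c₁ cr r n := by
      have hd := dirichlet_unique (fun n => b n - AdjGeom.cf a c₁ cr r n) ?_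
      · intro n hn; linear_combination hd n hn
      · filter_upwards [Filter.eventually_gt_atTop σ₀, Filter.eventually_ge_atTop (1:ℝ), hev]
          with x hx hx1 hεx
        have hxne : x ≠ 0 := by linarith
        obtain ⟨hcs, hceq⟩ := AdjGeom.key_at r hr c₁ cr hcr hσ' a ha0 ha x hx1 hεx
        have hbsum : Summable (fun n : ℕ => b n * (n:ℂ) ^ (-(x:ℂ))) := by
          apply Summable.of_norm
          exact (hbconv (x:ℂ) (by simpa using hx)).congr
            (fun n => (norm_term_eq (b n) n hxne).symm)
        have hcsum : Summable (fun n : ℕ => AdjGeom.cf a c₁ cr r n * (n:ℂ) ^ (-(x:ℂ))) := by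
          apply Summable.of_norm
          exact hcs.congr (fun n => (norm_term_eq _ n hxne).symm)
        constructor
        · refine Summable.of_nonneg_of_le (fun n => by positivity)
            (f := fun n => ‖b n‖ * (n:ℝ) ^ (-x) + ‖AdjGeom.cf a c₁ cr r n‖ * (n:ℝ) ^ (-x))
            (fun n => ?_) ?_
          · calc ‖b n - AdjGeom.cf a c₁ cr r n‖ * (n:ℝ) ^ (-x)
                ≤ (‖b n‖ + ‖AdjGeom.cf a c₁ cr r n‖) * (n:ℝ) ^ (-x) := by
                  apply mul_le_mul_of_nonneg_right (norm_sub_le _ _) (by positivity)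
              _ = ‖b n‖ * (n:ℝ) ^ (-x) + ‖AdjGeom.cf a c₁ cr r n‖ * (n:ℝ) ^ (-x) := by ring
          · exact Summable.add (by simpa using hbconv (x:ℂ) (by simpa using hx)) hcs
        · have hsplit2 : ∑' n : ℕ, (b n - AdjGeom.cf a c₁ cr r n) * (n:ℂ) ^ (-(x:ℂ))
              = (∑' n : ℕ, b n * (n:ℂ) ^ (-(x:ℂ)))
                - ∑' n : ℕ, AdjGeom.cf a c₁ cr r n * (n:ℂ) ^ (-(x:ℂ)) := by
            rw [← Summable.tsum_sub hbsum hcsum]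
            exact tsum_congr (fun n => by ring)
          rw [hsplit2, hcomp (x:ℂ) (by simpa using hx), hceq]
          exact sub_self _
    constructor
    · have h1 : b 1 = AdjGeom.cf a c₁ cr r 1 := hckey 1 one_ne_zero
      have h2 : AdjGeom.cf a c₁ cr r 1 = AdjGeom.tf a c₁ cr 0 := by
        have h3 := AdjGeom.cf_pow (a := a) (c₁ := c₁) (cr := cr) hr1 0
        rwa [pow_zero] at h3
      rw [h1, h2]
      apply tsum_congr
      intro n
      simp [AdjGeom.Gf]
    · intro m hm
      rw [hckey (q ^ m) (by positivity)]
      apply AdjGeom.cf_not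
      intro k hk
      rcases Nat.eq_zero_or_pos k with h0 | h0
      · subst h0
        rw [pow_zero] at hk
        exact absurd hk.symm (Nat.ne_of_gt (Nat.one_lt_pow hm (by omega)))
      · exact hpow k m h0 (Nat.pos_of_ne_zero hm) hk
end

section
/- Let φ_0(s) = s and suppose φ_1 ∈ 𝒢 is a symbol such that, for every finite set Q of primes and every α ∈ ℝ, the Q-projection φ_{1,Q} admits a finite angular derivative at iα with φ_{1,Q}(iα) = iα. Then φ_1(s) = s. -/
open Filter Topology

private lemma term_norm_aux (c : ℕ → ℂ) {σ : ℝ} (hσ : 0 < σ) (m : ℕ) :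
    ‖c m * (m : ℂ) ^ (-(σ : ℂ))‖ = ‖c m‖ * (m : ℝ) ^ (-σ) := by
  rcases Nat.eq_zero_or_pos m with rfl | hm
  · rw [Nat.cast_zero, Complex.zero_cpow (by
      simpa using (Complex.ofReal_ne_zero.2 hσ.ne' : (σ : ℂ) ≠ 0)),
      Nat.cast_zero, Real.zero_rpow (by linarith : -σ ≠ 0)]
    simp
  · have h0 : (0 : ℝ) < (m : ℝ) := by exact_mod_cast hm
    rw [norm_mul]
    congr 1
    rw [show ((m : ℕ) : ℂ) = (((m : ℝ) : ℂ)) by push_cast; ring]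
    rw [Complex.norm_cpow_eq_rpow_re_of_pos h0]
    simp

private lemma term_summable_aux (c : ℕ → ℂ) {σ : ℝ} (hσ : 0 < σ)
    (h : Summable fun n : ℕ => ‖c n‖ * (n : ℝ) ^ (-σ)) :
    Summable fun m : ℕ => c m * (m : ℂ) ^ (-(σ : ℂ)) := by
  refine Summable.of_norm ?_
  simpa only [term_norm_aux c hσ] using h

private lemma tendsto_Icc_sum_aux (f : ℕ → ℂ) (hf : Summable f) (h0 : f 0 = 0) :
    Tendsto (fun N : ℕ => ∑ n ∈ Finset.Icc 1 N, f n) atTop (𝓝 (∑' n, f n)) := by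
  have h1 : ∀ N : ℕ, ∑ n ∈ Finset.range (N + 1), f n = ∑ n ∈ Finset.Icc 1 N, f n := by
    intro N
    have : Finset.range (N + 1) = insert 0 (Finset.Icc 1 N) := by
      ext m; simp [Nat.lt_succ_iff]; omega
    rw [this, Finset.sum_insert (by simp), h0, zero_add]
  have h2 := hf.hasSum.tendsto_sum_nat.comp (tendsto_add_atTop_nat 1)
  refine h2.congr ?_
  intro N
  exact h1 N

set_option maxHeartbeats 1000000 in
private lemma coeff_zero_aux (c : ℕ → ℂ)
    (habs : ∀ σ : ℝ, 2 ≤ σ → Summable fun n : ℕ => ‖c n‖ * (n : ℝ) ^ (-σ))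
    (hc1 : c 1 = 0)
    (hzero : ∀ σ : ℝ, 2 ≤ σ → ∑' m : ℕ, c m * (m : ℂ) ^ (-(σ : ℂ)) = 0) :
    ∀ n : ℕ, 2 ≤ n → c n = 0 := by
  have hM2 : Summable fun n : ℕ => ‖c n‖ * (n : ℝ) ^ (-(2 : ℝ)) := habs 2 le_rfl
  set M : ℝ := ∑' n : ℕ, ‖c n‖ * (n : ℝ) ^ (-(2 : ℝ)) with hMdef
  intro n
  induction n using Nat.strong_induction_on with
  | _ n ih =>
    intro hn2
    have hnpos : (0 : ℝ) < (n : ℝ) := by exact_mod_cast Nat.lt_of_lt_of_le two_pos hn2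
    have hn1pos : (0 : ℝ) < ((n : ℝ) + 1) := by linarith
    -- main estimate for each σ = k ≥ 2
    have key : ∀ k : ℕ, 2 ≤ k →
        ‖c n‖ ≤ (M * ((n : ℝ) + 1) ^ (2 : ℝ)) * ((n : ℝ) / ((n : ℝ) + 1)) ^ k := by
      intro k hk
      set σ : ℝ := (k : ℝ) with hσdef
      have hσ2 : 2 ≤ σ := by rw [hσdef]; exact_mod_cast hk
      have hσpos : (0 : ℝ) < σ := by linarith
      set f : ℕ → ℂ := fun m => c m * (m : ℂ) ^ (-(σ : ℂ)) with hfdef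
      have hfs : Summable f := term_summable_aux c hσpos (habs σ hσ2)
      have hsplit := Summable.sum_add_tsum_nat_add (f := f) (n + 1) hfs
      have hexp0 : -(σ : ℂ) ≠ 0 := neg_ne_zero.2 (Complex.ofReal_ne_zero.2 hσpos.ne')
      have hf0 : f 0 = 0 := by
        rw [hfdef]; simp [Complex.zero_cpow hexp0]
      have hhead : ∑ i ∈ Finset.range (n + 1), f i = f n := by
        refine Finset.sum_eq_single_of_mem n (Finset.self_mem_range_succ n) ?_
        intro b hb hbn
        have hb' : b < n + 1 := Finset.mem_range.1 hb
        rcases Nat.lt_or_ge b 2 with hb2 | hb2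
        · interval_cases b
          · exact hf0
          · simp [hfdef, hc1]
        · have : c b = 0 := ih b (by omega) hb2
          simp [hfdef, this]
      have heq : f n = -∑' i : ℕ, f (i + (n + 1)) := by
        have h := hsplit
        rw [hhead, hzero σ hσ2] at h
        exact eq_neg_of_add_eq_zero_left h
      -- summability of tails
      have htail_norm : Summable fun i : ℕ => ‖f (i + (n + 1))‖ := by
        refine (summable_nat_add_iff (f := fun m : ℕ => ‖f m‖) (n + 1)).2 ?_
        simpa only [hfdef, term_norm_aux c hσpos] using habs σ hσ2
      have htail2 : Summable fun i : ℕ => ‖c (i + (n + 1))‖ * ((i + (n + 1) : ℕ) : ℝ) ^ (-(2:ℝ)) :=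
        (summable_nat_add_iff (f := fun m : ℕ => ‖c m‖ * (m : ℝ) ^ (-(2:ℝ))) (n + 1)).2 hM2
      -- termwise bound
      have hterm : ∀ i : ℕ, ‖f (i + (n + 1))‖ ≤
          (‖c (i + (n + 1))‖ * ((i + (n + 1) : ℕ) : ℝ) ^ (-(2:ℝ))) * ((n : ℝ) + 1) ^ ((2:ℝ) - σ) := by
        intro i
        set m : ℕ := i + (n + 1) with hmdef
        have hmpos : (0 : ℝ) < (m : ℝ) := by positivity
        have hmge : ((n : ℝ) + 1) ≤ (m : ℝ) := by
          have : n + 1 ≤ m := by omega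
          exact_mod_cast this
        rw [term_norm_aux c hσpos]
        have hdecomp : (m : ℝ) ^ (-σ) = (m : ℝ) ^ (-(2:ℝ)) * (m : ℝ) ^ ((2:ℝ) - σ) := by
          rw [← Real.rpow_add hmpos]; ring_nf
        rw [hdecomp, ← mul_assoc]
        refine mul_le_mul_of_nonneg_left ?_ (by positivity)
        exact Real.rpow_le_rpow_of_nonpos hn1pos hmge (by linarith)
      -- tail tsum bound
      have htsumle : ∑' i : ℕ, ‖f (i + (n + 1))‖ ≤ M * ((n : ℝ) + 1) ^ ((2:ℝ) - σ) := by
        have h1 : ∑' i : ℕ, ‖f (i + (n + 1))‖ ≤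
            ∑' i : ℕ, (‖c (i + (n + 1))‖ * ((i + (n + 1) : ℕ) : ℝ) ^ (-(2:ℝ)))
              * ((n : ℝ) + 1) ^ ((2:ℝ) - σ) :=
          Summable.tsum_le_tsum hterm htail_norm (htail2.mul_right _)
        rw [tsum_mul_right] at h1
        refine h1.trans (mul_le_mul_of_nonneg_right ?_ (by positivity))
        have h2 : ∑ i ∈ Finset.range (n + 1), (‖c i‖ * (i : ℝ) ^ (-(2:ℝ)))
            + ∑' i : ℕ, (‖c (i + (n + 1))‖ * ((i + (n + 1) : ℕ) : ℝ) ^ (-(2:ℝ))) = M :=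
          Summable.sum_add_tsum_nat_add (f := fun i : ℕ => ‖c i‖ * (i : ℝ) ^ (-(2:ℝ))) (n + 1) hM2
        have h3 : 0 ≤ ∑ i ∈ Finset.range (n + 1), (‖c i‖ * (i : ℝ) ^ (-(2:ℝ))) := by
          refine Finset.sum_nonneg fun i _ => by positivity
        linarith
      -- put together
      have hfn : ‖f n‖ ≤ M * ((n : ℝ) + 1) ^ ((2:ℝ) - σ) := by
        rw [heq, norm_neg]
        exact (norm_tsum_le_tsum_norm htail_norm).trans htsumle
      rw [term_norm_aux c hσpos] at hfn
      -- divide by n ^ (-σ)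
      have hnσ : (0 : ℝ) < (n : ℝ) ^ (-σ) := Real.rpow_pos_of_pos hnpos _
      have hcn : ‖c n‖ ≤ M * ((n : ℝ) + 1) ^ ((2:ℝ) - σ) * (n : ℝ) ^ σ := by
        have := mul_le_mul_of_nonneg_right hfn (le_of_lt (Real.rpow_pos_of_pos hnpos σ))
        rw [mul_assoc, ← Real.rpow_add hnpos, neg_add_cancel, Real.rpow_zero, mul_one] at this
        exact this
      refine hcn.trans (le_of_eq ?_)
      have hpow : ((n:ℝ)+1) ^ σ ≠ 0 := (Real.rpow_pos_of_pos hn1pos σ).ne'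
      rw [show (2:ℝ) - σ = 2 + (-σ) by ring, Real.rpow_add hn1pos,
        ← Real.rpow_natCast ((n:ℝ)/((n:ℝ)+1)) k, ← hσdef,
        Real.div_rpow hnpos.le hn1pos.le, Real.rpow_neg hn1pos.le]
      field_simp
    -- conclude by letting k → ∞
    have hr0 : (0 : ℝ) ≤ (n : ℝ) / ((n : ℝ) + 1) := by positivity
    have hr1 : (n : ℝ) / ((n : ℝ) + 1) < 1 := by
      rw [div_lt_one hn1pos]; linarith
    have hlim : Tendsto (fun k : ℕ => (M * ((n : ℝ) + 1) ^ (2 : ℝ)) * ((n : ℝ) / ((n : ℝ) + 1)) ^ k)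
        atTop (𝓝 0) := by
      have := (tendsto_pow_atTop_nhds_zero_of_lt_one hr0 hr1).const_mul
        (M * ((n : ℝ) + 1) ^ (2 : ℝ))
      simpa using this
    have hle : ‖c n‖ ≤ 0 := by
      refine ge_of_tendsto hlim ?_
      filter_upwards [eventually_ge_atTop 2] with k hk using key k hk
    simpa using norm_le_zero_iff.1 hle

/-- Rigidity of the identity symbol: let `φ₁(s) = c₀ s + ψ(s)`,
`ψ(s) = Σ_{n≥1} c_n n^{-s}`, be a Gordon–Hedenmalm symbol. Suppose that for every
finite set `Q` of primes the `Q`-projection `φ_{1,Q}` (given by a holomorphic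
extension `Φ Q` to `ℂ₊` of `c₀ s + c₁ + Σ_{n ∈ ℕ_Q} c_n n^{-s}`) admits a finite
angular derivative at every boundary point `iα` with boundary value
`φ_{1,Q}(iα) = iα`. Then `φ₁(s) = s`, i.e. `c₀ = 1` and `c_n = 0` for all `n ≥ 1`. -/
theorem identity_symbol_rigidity
    (c₀ : ℕ) (c : ℕ → ℂ) (ψ : ℂ → ℂ)
    (hψconv : ∀ ε : ℝ, 0 < ε →
      TendstoUniformlyOn
        (fun (N : ℕ) (s : ℂ) => ∑ n ∈ Finset.Icc 1 N, c n * (n : ℂ) ^ (-s))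
        ψ atTop {s : ℂ | ε ≤ s.re})
    (hGH₀ : c₀ = 0 → ∀ s : ℂ, 0 < s.re → 1 / 2 < (ψ s).re)
    (hGH₁ : 1 ≤ c₀ →
      (∀ s : ℂ, 0 < s.re → ψ s = c 1 ∧ 0 ≤ (c 1).re) ∨
      (∀ s : ℂ, 0 < s.re → 0 < (ψ s).re))
    (habs : ∀ s : ℂ, 1 / 2 < s.re → Summable fun n : ℕ => ‖c n‖ * (n : ℝ) ^ (-s.re))
    (Φ : Finset ℕ → ℂ → ℂ)
    (hΦdiff : ∀ Q : Finset ℕ, (∀ p ∈ Q, p.Prime) →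
      DifferentiableOn ℂ (Φ Q) {s : ℂ | 0 < s.re})
    (hΦeq : ∀ Q : Finset ℕ, (∀ p ∈ Q, p.Prime) → ∀ s : ℂ, 1 / 2 < s.re →
      Φ Q s = (c₀ : ℂ) * s + c 1
        + ∑' n : ℕ, if 2 ≤ n ∧ ∀ p ∈ n.primeFactors, p ∈ Q then c n * (n : ℂ) ^ (-s) else 0)
    (hang : ∀ Q : Finset ℕ, (∀ p ∈ Q, p.Prime) → ∀ α : ℝ,
      ∃ C : ℝ, ∃ᶠ s in nhdsWithin ((α : ℂ) * Complex.I) {s : ℂ | 0 < s.re},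
        (Φ Q s).re / s.re ≤ C)
    (hrad : ∀ Q : Finset ℕ, (∀ p ∈ Q, p.Prime) → ∀ α : ℝ,
      Tendsto (fun σ : ℝ => Φ Q ((σ : ℂ) + (α : ℂ) * Complex.I))
        (nhdsWithin 0 (Set.Ioi 0)) (nhds ((α : ℂ) * Complex.I))) :
    c₀ = 1 ∧ c 1 = 0 ∧ ∀ n : ℕ, 2 ≤ n → c n = 0 := by
  have htriv : ∀ p ∈ (∅ : Finset ℕ), p.Prime := by simp
  have hUopen : IsOpen {s : ℂ | 0 < s.re} := isOpen_lt continuous_const Complex.continuous_re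
  have hVopen : IsOpen {s : ℂ | 1 / 2 < s.re} := isOpen_lt continuous_const Complex.continuous_re
  -- Step A: the empty projection is affine, so radial limits give c₀ = 1 and c 1 = 0.
  have hΦ0 : ∀ s : ℂ, 1 / 2 < s.re → Φ ∅ s = (c₀ : ℂ) * s + c 1 := by
    intro s hs
    rw [hΦeq ∅ htriv s hs]
    have hz : ∀ n : ℕ,
        (if 2 ≤ n ∧ ∀ p ∈ n.primeFactors, p ∈ (∅ : Finset ℕ) then c n * (n : ℂ) ^ (-s) else 0)
          = 0 := by
      intro n
      rw [if_neg]
      rintro ⟨hn2, hp⟩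
      obtain ⟨p, hp', hdvd⟩ := Nat.exists_prime_and_dvd (show n ≠ 1 by omega)
      exact Finset.notMem_empty p
        (hp p (Nat.mem_primeFactors.mpr ⟨hp', hdvd, by omega⟩))
    rw [tsum_congr hz, tsum_zero, add_zero]
  have hEqOn : Set.EqOn (Φ ∅) (fun s : ℂ => (c₀ : ℂ) * s + c 1) {s : ℂ | 0 < s.re} := by
    refine AnalyticOnNhd.eqOn_of_preconnected_of_eventuallyEq
      ((hΦdiff ∅ htriv).analyticOnNhd hUopen)
      (((differentiable_id.const_mul ((c₀ : ℂ))).add_const (c 1)).differentiableOn.analyticOnNhd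
        hUopen)
      (convex_halfSpace_re_gt 0).isPreconnected
      (show (2 : ℂ) ∈ {s : ℂ | 0 < s.re} by norm_num [Set.mem_setOf_eq]) ?_
    exact Filter.eventuallyEq_of_mem
      (hVopen.mem_nhds (by norm_num [Set.mem_setOf_eq])) (fun s hs => hΦ0 s hs)
  have hlim : ∀ α : ℝ, (c₀ : ℂ) * ((α : ℂ) * Complex.I) + c 1 = (α : ℂ) * Complex.I := by
    intro α
    have hmem : ∀ σ : ℝ, σ ∈ Set.Ioi (0 : ℝ) →
        ((σ : ℂ) + (α : ℂ) * Complex.I) ∈ {s : ℂ | 0 < s.re} := by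
      intro σ hσ
      simpa [Complex.add_re, Complex.ofReal_re, Complex.mul_re, Complex.I_re, Complex.I_im,
        Complex.ofReal_im] using hσ
    have hconti : Tendsto (fun σ : ℝ => (c₀ : ℂ) * ((σ : ℂ) + (α : ℂ) * Complex.I) + c 1)
        (nhdsWithin 0 (Set.Ioi 0)) (nhds ((c₀ : ℂ) * ((α : ℂ) * Complex.I) + c 1)) := by
      have hc : Continuous fun σ : ℝ => (c₀ : ℂ) * ((σ : ℂ) + (α : ℂ) * Complex.I) + c 1 :=
        (continuous_const.mul (Complex.continuous_ofReal.add continuous_const)).add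
          continuous_const
      have h0 := (hc.tendsto 0).mono_left
        (nhdsWithin_le_nhds (s := Set.Ioi (0 : ℝ)))
      simpa using h0
    have heqev : (fun σ : ℝ => Φ ∅ ((σ : ℂ) + (α : ℂ) * Complex.I)) =ᶠ[nhdsWithin 0 (Set.Ioi 0)]
        (fun σ : ℝ => (c₀ : ℂ) * ((σ : ℂ) + (α : ℂ) * Complex.I) + c 1) :=
      Filter.eventuallyEq_of_mem self_mem_nhdsWithin (fun σ hσ => hEqOn (hmem σ hσ))
    exact (tendsto_nhds_unique ((hrad ∅ htriv α).congr' heqev) hconti).symm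
  have hc1 : c 1 = 0 := by
    have h0 := hlim 0
    simpa using h0
  have hc0C : (c₀ : ℂ) = 1 := by
    have h1 := hlim 1
    rw [hc1, add_zero] at h1
    have h2 : (c₀ : ℂ) * (((1 : ℝ) : ℂ) * Complex.I) = 1 * (((1 : ℝ) : ℂ) * Complex.I) := by
      rw [h1]; ring
    exact mul_right_cancel₀ (by simp [Complex.I_ne_zero]) h2
  have hc0 : c₀ = 1 := by exact_mod_cast hc0C
  -- summability facts
  have habsR : ∀ σ : ℝ, 2 ≤ σ → Summable fun n : ℕ => ‖c n‖ * (n : ℝ) ^ (-σ) := by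
    intro σ hσ
    have := habs ((σ : ℝ) : ℂ) (by simp only [Complex.ofReal_re]; linarith)
    simpa using this
  have hM2 : Summable fun n : ℕ => ‖c n‖ * (n : ℝ) ^ (-(2 : ℝ)) := habsR 2 le_rfl
  set M2 : ℝ := ∑' n : ℕ, ‖c n‖ * (n : ℝ) ^ (-(2 : ℝ)) with hM2def
  -- bound on ψ at real points σ ≥ 2
  have hψbd : ∀ σ : ℝ, 2 ≤ σ → ‖ψ ((σ : ℝ) : ℂ)‖ ≤ M2 * (2 : ℝ) ^ ((2 : ℝ) - σ) := by
    intro σ hσ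
    have hσpos : (0 : ℝ) < σ := by linarith
    have hmem : ((σ : ℝ) : ℂ) ∈ {s : ℂ | 1 ≤ s.re} := by
      simp only [Set.mem_setOf_eq, Complex.ofReal_re]; linarith
    have htend := ((hψconv 1 one_pos).tendsto_at hmem).norm
    refine le_of_tendsto htend (Filter.Eventually.of_forall fun N => ?_)
    calc ‖∑ n ∈ Finset.Icc 1 N, c n * (n : ℂ) ^ (-((σ : ℝ) : ℂ))‖
        ≤ ∑ n ∈ Finset.Icc 1 N, ‖c n * (n : ℂ) ^ (-((σ : ℝ) : ℂ))‖ := norm_sum_le _ _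
      _ ≤ ∑ n ∈ Finset.Icc 1 N, (‖c n‖ * (n : ℝ) ^ (-(2 : ℝ))) * (2 : ℝ) ^ ((2 : ℝ) - σ) := by
          refine Finset.sum_le_sum fun n hn => ?_
          rw [term_norm_aux c hσpos]
          rcases Finset.mem_Icc.1 hn with ⟨h1n, _⟩
          rcases Nat.lt_or_ge n 2 with h2 | h2
          · have hn1 : n = 1 := by omega
            subst hn1
            simp only [hc1, norm_zero, zero_mul]
            positivity
          · have hnpos : (0 : ℝ) < (n : ℝ) := by
              have : (0 : ℕ) < n := by omega
              exact_mod_cast this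
            have hn2' : (2 : ℝ) ≤ (n : ℝ) := by exact_mod_cast h2
            have hdecomp : (n : ℝ) ^ (-σ) = (n : ℝ) ^ (-(2 : ℝ)) * (n : ℝ) ^ ((2 : ℝ) - σ) := by
              rw [← Real.rpow_add hnpos]; ring_nf
            rw [hdecomp, ← mul_assoc]
            refine mul_le_mul_of_nonneg_left ?_ (by positivity)
            exact Real.rpow_le_rpow_of_nonpos two_pos hn2' (by linarith)
      _ ≤ M2 * (2 : ℝ) ^ ((2 : ℝ) - σ) := by
          rw [← Finset.sum_mul]
          exact mul_le_mul_of_nonneg_right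
            (Summable.sum_le_tsum _ (fun i _ => by positivity) hM2) (by positivity)
  -- case analysis on the Gordon–Hedenmalm alternative
  rcases hGH₁ (by omega) with hcase | hcase
  · -- ψ is identically c 1 = 0; all coefficients vanish.
    refine ⟨hc0, hc1, coeff_zero_aux c habsR hc1 ?_⟩
    intro σ hσ
    have hσpos : (0 : ℝ) < σ := by linarith
    have hf0 : (fun m : ℕ => c m * (m : ℂ) ^ (-(σ : ℂ))) 0 = 0 := by
      simp [Complex.zero_cpow
        (neg_ne_zero.2 (Complex.ofReal_ne_zero.2 hσpos.ne') : -(σ : ℂ) ≠ 0)]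
    have hfs := term_summable_aux c hσpos (habsR σ hσ)
    have ht1 := tendsto_Icc_sum_aux _ hfs hf0
    have ht2 := (hψconv 1 one_pos).tendsto_at
      (show ((σ : ℝ) : ℂ) ∈ {s : ℂ | 1 ≤ s.re} by
        simp only [Set.mem_setOf_eq, Complex.ofReal_re]; linarith)
    have hψσ : ψ ((σ : ℝ) : ℂ) = 0 := by
      rw [(hcase ((σ : ℝ) : ℂ) (by simp only [Complex.ofReal_re]; linarith)).1, hc1]
    rw [hψσ] at ht2
    exact tendsto_nhds_unique ht1 ht2
  · -- ψ has strictly positive real part: contradiction via the Schwarz lemma.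
    exfalso
    -- ψ is holomorphic on the right half-plane
    have hψdiff : DifferentiableOn ℂ ψ {s : ℂ | 0 < s.re} := by
      have hcover : {s : ℂ | 0 < s.re} = ⋃ k : ℕ, {s : ℂ | 1 / ((k : ℝ) + 1) < s.re} := by
        ext s
        simp only [Set.mem_setOf_eq, Set.mem_iUnion]
        constructor
        · intro hs
          exact exists_nat_one_div_lt hs
        · rintro ⟨k, hk⟩
          have : (0 : ℝ) < 1 / ((k : ℝ) + 1) := by positivity
          linarith
      have hTLU : TendstoLocallyUniformlyOn
          (fun (N : ℕ) (s : ℂ) => ∑ n ∈ Finset.Icc 1 N, c n * (n : ℂ) ^ (-s)) ψ atTop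
          {s : ℂ | 0 < s.re} := by
        rw [hcover]
        refine tendstoLocallyUniformlyOn_iUnion
          (fun k => isOpen_lt continuous_const Complex.continuous_re) (fun k => ?_)
        exact ((hψconv (1 / ((k : ℝ) + 1)) (by positivity)).mono
          (fun s hs => show 1 / ((k : ℝ) + 1) ≤ s.re from
            le_of_lt hs)).tendstoLocallyUniformlyOn
      refine hTLU.differentiableOn (Filter.Eventually.of_forall fun N => ?_) hUopen
      refine Differentiable.differentiableOn (Differentiable.fun_sum fun n hn => ?_)
      have hn0 : ((n : ℕ) : ℂ) ≠ 0 := by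
        have h1 : 1 ≤ n := (Finset.mem_Icc.1 hn).1
        exact_mod_cast (by omega : n ≠ 0)
      exact (differentiable_id.neg.const_cpow (Or.inl hn0)).const_mul (c n)
    set b : ℂ := ψ 1 with hbdef
    have hbre : 0 < b.re := hcase 1 (by norm_num)
    set T : ℂ → ℂ := fun z => (1 + z) / (1 - z) with hTdef
    have hTden : ∀ z ∈ Metric.ball (0 : ℂ) 1, (1 : ℂ) - z ≠ 0 := by
      intro z hz h
      rw [sub_eq_zero] at h
      rw [Metric.mem_ball, dist_zero_right, ← h] at hz
      norm_num at hz
    have hTre : ∀ z ∈ Metric.ball (0 : ℂ) 1, 0 < (T z).re := by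
      intro z hz
      have h1 : Complex.normSq z < 1 := by
        rw [Metric.mem_ball, dist_zero_right] at hz
        have h := Complex.normSq_eq_norm_sq z
        nlinarith [norm_nonneg z]
      have hden : 0 < Complex.normSq (1 - z) := Complex.normSq_pos.2 (hTden z hz)
      have hnum : (1 + z).re * (1 - z).re + (1 + z).im * (1 - z).im = 1 - Complex.normSq z := by
        simp only [Complex.add_re, Complex.sub_re, Complex.add_im, Complex.sub_im,
          Complex.one_re, Complex.one_im, Complex.normSq_apply]
        ring
      show 0 < ((1 + z) / (1 - z)).re
      rw [Complex.div_re, ← add_div, hnum]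
      exact div_pos (by linarith) hden
    have hSden : ∀ w : ℂ, 0 < w.re → w + (starRingEnd ℂ) b ≠ 0 := by
      intro w hw h
      have h2 : (w + (starRingEnd ℂ) b).re = w.re + b.re := by
        simp [Complex.add_re, Complex.conj_re]
      rw [h] at h2
      simp only [Complex.zero_re] at h2
      linarith
    have hSlt : ∀ w : ℂ, 0 < w.re →
        ‖(w - b) / (w + (starRingEnd ℂ) b)‖ < 1 := by
      intro w hw
      have h2 : Complex.normSq (w - b) < Complex.normSq (w + (starRingEnd ℂ) b) := by
        simp only [Complex.normSq_apply, Complex.sub_re, Complex.add_re, Complex.sub_im,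
          Complex.add_im, Complex.conj_re, Complex.conj_im]
        nlinarith [mul_pos hw hbre]
      have h3 : ‖w - b‖ < ‖w + (starRingEnd ℂ) b‖ := by
        rw [Complex.norm_def, Complex.norm_def]
        exact Real.sqrt_lt_sqrt (Complex.normSq_nonneg _) h2
      rw [norm_div]
      rw [div_lt_one (by
        have := norm_nonneg (w - b)
        linarith)]
      exact h3
    set g : ℂ → ℂ := fun z => (ψ (T z) - b) / (ψ (T z) + (starRingEnd ℂ) b) with hgdef
    have hTdiff : DifferentiableOn ℂ T (Metric.ball (0 : ℂ) 1) := by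
      refine DifferentiableOn.div ?_ ?_ hTden
      · exact ((differentiable_const (1 : ℂ)).add differentiable_id).differentiableOn
      · exact ((differentiable_const (1 : ℂ)).sub differentiable_id).differentiableOn
    have hTmaps : Set.MapsTo T (Metric.ball (0 : ℂ) 1) {s : ℂ | 0 < s.re} :=
      fun z hz => hTre z hz
    have hψT : DifferentiableOn ℂ (fun z => ψ (T z)) (Metric.ball (0 : ℂ) 1) :=
      hψdiff.comp hTdiff hTmaps
    have hgdiff : DifferentiableOn ℂ g (Metric.ball (0 : ℂ) 1) := by
      refine DifferentiableOn.div (hψT.sub (differentiableOn_const b))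
        (hψT.add (differentiableOn_const _)) ?_
      intro z hz
      exact hSden _ (hcase (T z) (hTre z hz))
    have hgmaps : Set.MapsTo g (Metric.ball (0 : ℂ) 1) (Metric.ball (0 : ℂ) 1) := by
      intro z hz
      rw [Metric.mem_ball, dist_zero_right]
      exact hSlt _ (hcase (T z) (hTre z hz))
    have hg0 : g 0 = 0 := by
      have hT0 : T 0 = 1 := by rw [hTdef]; norm_num
      rw [hgdef]
      simp only [hT0, ← hbdef, sub_self, zero_div]
    -- Schwarz lemma estimate at the real points σ = k
    have hbnorm : ∀ k : ℕ, 2 ≤ k → ‖b‖ ≤ ((k : ℝ) + 1) * ‖ψ (((k : ℝ) : ℝ) : ℂ)‖ := by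
      intro k hk
      set σ : ℝ := (k : ℝ) with hσdef
      have hσ2 : (2 : ℝ) ≤ σ := by rw [hσdef]; exact_mod_cast hk
      set z : ℂ := (((σ - 1) / (σ + 1) : ℝ) : ℂ) with hzdef
      have hznn : (0 : ℝ) ≤ (σ - 1) / (σ + 1) := div_nonneg (by linarith) (by linarith)
      have hzabs : ‖z‖ = (σ - 1) / (σ + 1) := by
        rw [hzdef, Complex.norm_real, Real.norm_eq_abs, abs_of_nonneg hznn]
      have hzr : ‖z‖ < 1 := by
        rw [hzabs, div_lt_one (by linarith)]
        linarith
      have hz1 : z ∈ Metric.ball (0 : ℂ) 1 := by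
        rw [Metric.mem_ball, dist_zero_right]
        exact hzr
      have hσ1 : ((σ : ℝ) : ℂ) + 1 ≠ 0 := by
        rw [show ((σ : ℝ) : ℂ) + 1 = (((σ + 1 : ℝ)) : ℂ) by push_cast; ring]
        exact Complex.ofReal_ne_zero.2 (by linarith)
      have hTz : T z = ((σ : ℝ) : ℂ) := by
        rw [hTdef]
        show (1 + z) / (1 - z) = ((σ : ℝ) : ℂ)
        rw [div_eq_iff (hTden z hz1), hzdef]
        push_cast
        field_simp
        ring
      have hs := Complex.norm_le_norm_of_mapsTo_ball hgdiff (hgmaps.mono_right Metric.ball_subset_closedBall) hg0 hzr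
      rw [hgdef] at hs
      simp only [hTz] at hs
      rw [hzabs] at hs
      set w : ℂ := ψ (((σ : ℝ)) : ℂ) with hwdef
      have hw : 0 < w.re := hcase _ (by simp only [Complex.ofReal_re]; linarith)
      have hdenpos : 0 < ‖w + (starRingEnd ℂ) b‖ := by
        rw [norm_pos_iff]
        exact hSden w hw
      rw [norm_div, div_le_iff₀ hdenpos] at hs
      have htri1 : ‖w + (starRingEnd ℂ) b‖ ≤ ‖w‖ + ‖b‖ := by
        calc ‖w + (starRingEnd ℂ) b‖
            ≤ ‖w‖ + ‖(starRingEnd ℂ) b‖ := norm_add_le _ _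
          _ = ‖w‖ + ‖b‖ := by rw [Complex.norm_conj]
      have htri2 : ‖b‖ - ‖w‖ ≤ ‖w - b‖ := by
        have h4 : ‖b - w‖ = ‖w - b‖ := norm_sub_rev b w
        have h5 : ‖b‖ - ‖w‖ ≤ ‖b - w‖ := norm_sub_norm_le b w
        linarith
      set ab : ℝ := ‖b‖
      set aw : ℝ := ‖w‖
      have habnn : 0 ≤ ab := norm_nonneg b
      have hawnn : 0 ≤ aw := norm_nonneg w
      set r : ℝ := (σ - 1) / (σ + 1) with hrdef
      have hkey : ab - aw ≤ r * (aw + ab) := by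
        have h5 : ‖w - b‖ ≤ r * (aw + ab) :=
          hs.trans (mul_le_mul_of_nonneg_left htri1 hznn)
        linarith
      have hσ1pos : (0 : ℝ) < σ + 1 := by linarith
      have hr' : r * (σ + 1) = σ - 1 := by
        rw [hrdef]; field_simp
      have h6 : (ab - aw) * (σ + 1) ≤ (r * (aw + ab)) * (σ + 1) :=
        mul_le_mul_of_nonneg_right hkey hσ1pos.le
      have h7 : (ab - aw) * (σ + 1) ≤ (σ - 1) * (aw + ab) := by
        rw [mul_right_comm, hr'] at h6
        exact h6
      have h8 : ab ≤ (σ + 1) * aw := by nlinarith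
      exact h8
    -- let k → ∞ : ‖b‖ = 0, contradicting re b > 0
    have hconv2 : ∀ k : ℕ, (2 : ℝ) ^ ((2 : ℝ) - (k : ℝ)) = 4 * (1 / 2 : ℝ) ^ k := by
      intro k
      rw [Real.rpow_sub two_pos, Real.rpow_natCast]
      norm_num
      rw [one_div, inv_pow, div_eq_mul_inv]
    have ha : Tendsto (fun k : ℕ => (((k : ℝ) + 1) * (1 / 2 : ℝ) ^ k)) atTop (𝓝 0) := by
      have h1 := tendsto_self_mul_const_pow_of_lt_one
        (by norm_num : (0 : ℝ) ≤ 1 / 2) (by norm_num : (1 / 2 : ℝ) < 1)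
      have h2 := tendsto_pow_atTop_nhds_zero_of_lt_one
        (by norm_num : (0 : ℝ) ≤ 1 / 2) (by norm_num : (1 / 2 : ℝ) < 1)
      have h3 := h1.add h2
      rw [add_zero] at h3
      refine h3.congr fun k => ?_
      ring
    have htend0 : Tendsto (fun k : ℕ => ((k : ℝ) + 1) * (M2 * (2 : ℝ) ^ ((2 : ℝ) - (k : ℝ))))
        atTop (𝓝 0) := by
      have h4 := ha.const_mul (4 * M2)
      rw [mul_zero] at h4
      refine h4.congr fun k => ?_
      rw [hconv2 k]
      ring
    have hble : b.re ≤ 0 := by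
      refine ge_of_tendsto htend0 ?_
      filter_upwards [eventually_ge_atTop 2] with k hk
      have h9 := hbnorm k hk
      have h10 := hψbd (k : ℝ) (by exact_mod_cast hk)
      calc b.re ≤ ‖b‖ := by
            exact Complex.re_le_norm b
        _ ≤ ((k : ℝ) + 1) * ‖ψ (((k : ℝ)) : ℂ)‖ := h9
        _ ≤ ((k : ℝ) + 1) * (M2 * (2 : ℝ) ^ ((2 : ℝ) - (k : ℝ))) := by
            refine mul_le_mul_of_nonneg_left h10 (by positivity)
    linarith
end
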